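/- arXiv:1803.03904 — 10 statements merged into one kernel-verified Lean document; each statement's English description precedes it below -/
import Mathlib

section
/- If (A,B) is a stable, controllable input normal pair (i.e., AA* + BB* = I, all eigenvalues of A have modulus < 1, and the controllability matrix has full rank), and (A',B') = (TAT⁻¹, TB) is also input normal for some invertible matrix T, then T is unitary. -/
open Matrix Filter

attribute [local instance] Matrix.linftyOpNormedRing Matrix.linftyOpNormedAlgebra
  Matrix.linfty_opNormOneClass

private lemma aux_pow_tendsto {m : ℕ} [NeZero m] (a : Matrix (Fin m) (Fin m) ℂ)
    (h : spectralRadius ℂ a < 1) : Tendsto (fun k => a ^ k) atTop (nhds 0) := by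
  obtain ⟨r, hr1, hr2⟩ := exists_between h
  have hrt : r ≠ ⊤ := (hr2.trans ENNReal.one_lt_top).ne
  set r' : NNReal := r.toNNReal with hr'
  have hrc : (r' : ENNReal) = r := ENNReal.coe_toNNReal hrt
  have hr1' : r' < 1 := by
    rw [← ENNReal.coe_lt_one_iff, hrc]; exact hr2
  have hev : ∀ᶠ k : ℕ in atTop, (‖a ^ k‖₊ : ENNReal) ^ (1 / (k : ℝ)) < r :=
    (spectrum.pow_nnnorm_pow_one_div_tendsto_nhds_spectralRadius a).eventually_lt_const hr1
  have hbound : ∀ᶠ k : ℕ in atTop, ‖a ^ k‖ ≤ (r' : ℝ) ^ k := by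
    filter_upwards [hev, eventually_ge_atTop 1] with k hk hk1
    have hk0 : (k : ℝ) ≠ 0 := Nat.cast_ne_zero.mpr (by omega)
    have := ENNReal.rpow_lt_rpow hk (by positivity : (0:ℝ) < (k:ℝ))
    rw [← ENNReal.rpow_mul, one_div, inv_mul_cancel₀ hk0, ENNReal.rpow_one] at this
    rw [ENNReal.rpow_natCast r k, ← hrc, ← ENNReal.coe_pow, ENNReal.coe_lt_coe] at this
    calc ‖a ^ k‖ = ((‖a ^ k‖₊ : NNReal) : ℝ) := rfl
    _ ≤ ((r' ^ k : NNReal) : ℝ) := by exact_mod_cast this.le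
    _ = (r' : ℝ) ^ k := by push_cast; ring
  apply tendsto_zero_iff_norm_tendsto_zero.mpr
  apply squeeze_zero' (by filter_upwards with k using norm_nonneg _) hbound
  exact tendsto_pow_atTop_nhds_zero_of_lt_one (by positivity) (by exact_mod_cast hr1')

private lemma aux_stein_zero {m : ℕ} [NeZero m] (A D : Matrix (Fin m) (Fin m) ℂ)
    (hstable : ∀ μ ∈ spectrum ℂ A, ‖μ‖ < 1)
    (hDk : ∀ k : ℕ, A ^ k * D * Aᴴ ^ k = D) : D = 0 := by
  have hsrA : spectralRadius ℂ A < 1 := by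
    have := spectrum.spectralRadius_lt_of_forall_lt A
      (fun z hz => show ‖z‖₊ < 1 by exact_mod_cast hstable z hz)
    simpa using this
  have hstH : ∀ μ ∈ spectrum ℂ Aᴴ, ‖μ‖ < 1 := by
    intro μ hμ
    rw [spectrum.mem_iff] at hμ
    have hμ' : (starRingEnd ℂ) μ ∈ spectrum ℂ A := by
      rw [spectrum.mem_iff]
      intro hu
      apply hμ
      have := hu.star
      simpa [Algebra.algebraMap_eq_smul_one, star_sub, star_smul,
        Matrix.star_eq_conjTranspose] using this
    simpa using hstable _ hμ'
  have hsrH : spectralRadius ℂ Aᴴ < 1 := by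
    have := spectrum.spectralRadius_lt_of_forall_lt Aᴴ
      (fun z hz => show ‖z‖₊ < 1 by exact_mod_cast hstH z hz)
    simpa using this
  have h1 : Tendsto (fun k : ℕ => A ^ k * D * Aᴴ ^ k) atTop (nhds (0 * D * 0)) :=
    ((aux_pow_tendsto A hsrA).mul tendsto_const_nhds).mul (aux_pow_tendsto Aᴴ hsrH)
  simp only [hDk, Matrix.zero_mul, Matrix.mul_zero] at h1
  exact tendsto_const_nhds_iff.mp h1

/-- If `(A,B)` is a stable, controllable input normal pair and `(TAT⁻¹, TB)` is also
input normal for an invertible `T`, then `T` is unitary. -/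
theorem stmt0 {n d : ℕ} (A : Matrix (Fin n) (Fin n) ℂ) (B : Matrix (Fin n) (Fin d) ℂ)
    (T : Matrix (Fin n) (Fin n) ℂ)
    (hIN : A * Aᴴ + B * Bᴴ = 1)
    (hstable : ∀ μ ∈ spectrum ℂ A, ‖μ‖ < 1)
    (hctrb : (Matrix.of fun (i : Fin n) (p : Fin n × Fin d) =>
      (A ^ (p.1 : ℕ) * B) i p.2).rank = n)
    (hT : IsUnit T)
    (hIN' : (T * A * T⁻¹) * (T * A * T⁻¹)ᴴ + (T * B) * (T * B)ᴴ = 1) :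
    T ∈ Matrix.unitaryGroup (Fin n) ℂ := by
  rcases Nat.eq_zero_or_pos n with hn | hn
  · subst hn
    rw [Matrix.mem_unitaryGroup_iff]
    exact Subsingleton.elim _ _
  haveI : NeZero n := ⟨hn.ne'⟩
  have hdet : IsUnit T.det := (Matrix.isUnit_iff_isUnit_det T).mp hT
  have hTl : T⁻¹ * T = 1 := Matrix.nonsing_inv_mul T hdet
  have hTr : T * T⁻¹ = 1 := Matrix.mul_nonsing_inv T hdet
  have hTH : IsUnit Tᴴ := by
    have := hT.star
    rwa [Matrix.star_eq_conjTranspose] at this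
  have hdetH : IsUnit Tᴴ.det := (Matrix.isUnit_iff_isUnit_det Tᴴ).mp hTH
  have hHl : (Tᴴ)⁻¹ * Tᴴ = 1 := Matrix.nonsing_inv_mul Tᴴ hdetH
  have hHr : Tᴴ * (Tᴴ)⁻¹ = 1 := Matrix.mul_nonsing_inv Tᴴ hdetH
  set Q : Matrix (Fin n) (Fin n) ℂ := T⁻¹ * (T⁻¹)ᴴ with hQdef
  have hinvH : (T⁻¹)ᴴ = (Tᴴ)⁻¹ := (Matrix.conjTranspose_nonsing_inv T)
  have hcancel : ∀ M : Matrix (Fin n) (Fin n) ℂ, T⁻¹ * (T * M * Tᴴ) * (Tᴴ)⁻¹ = M := by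
    intro M
    calc T⁻¹ * (T * M * Tᴴ) * (Tᴴ)⁻¹ = (T⁻¹ * T) * (M * (Tᴴ * (Tᴴ)⁻¹)) := by
          simp only [Matrix.mul_assoc]
    _ = M := by rw [hTl, hHr, Matrix.one_mul, Matrix.mul_one]
  have hIN'2 : T * (A * Q * Aᴴ + B * Bᴴ) * Tᴴ = 1 := by
    rw [← hIN']
    simp only [hQdef, conjTranspose_mul, hinvH, Matrix.mul_add, Matrix.add_mul,
      Matrix.mul_assoc]
  have hQ : A * Q * Aᴴ + B * Bᴴ = Q := by
    have := hcancel (A * Q * Aᴴ + B * Bᴴ)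
    rw [hIN'2] at this
    rw [← this, Matrix.mul_one, hQdef, hinvH]
  have hD : A * (Q - 1) * Aᴴ = Q - 1 := by
    have e1 : A * Q * Aᴴ = Q - B * Bᴴ := eq_sub_of_add_eq hQ
    have e2 : A * Aᴴ = 1 - B * Bᴴ := eq_sub_of_add_eq hIN
    calc A * (Q - 1) * Aᴴ = A * Q * Aᴴ - A * Aᴴ := by noncomm_ring
    _ = (Q - B * Bᴴ) - (1 - B * Bᴴ) := by rw [e1, e2]
    _ = Q - 1 := by abel
  have hDk : ∀ k : ℕ, A ^ k * (Q - 1) * Aᴴ ^ k = Q - 1 := by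
    intro k
    induction k with
    | zero => simp
    | succ k ih =>
      rw [pow_succ' A k, pow_succ Aᴴ k]
      calc A * A ^ k * (Q - 1) * (Aᴴ ^ k * Aᴴ)
          = A * (A ^ k * (Q - 1) * Aᴴ ^ k) * Aᴴ := by simp only [Matrix.mul_assoc]
      _ = Q - 1 := by rw [ih, hD]
  have hQ1 : Q = 1 := sub_eq_zero.mp (aux_stein_zero A (Q - 1) hstable hDk)
  have hinv : (Tᴴ)⁻¹ = T := by
    have : T * (T⁻¹ * (Tᴴ)⁻¹) = T * 1 := by
      rw [← hinvH, ← hQdef, hQ1]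
    rw [← Matrix.mul_assoc, hTr, Matrix.one_mul, Matrix.mul_one] at this
    exact this
  rw [Matrix.mem_unitaryGroup_iff', Matrix.star_eq_conjTranspose]
  have h2 : Tᴴ * T = Tᴴ * (Tᴴ)⁻¹ := by rw [hinv]
  exact h2.trans hHr
end

section
/- Let A and Â be n×n lower triangular complex matrices with equal diagonals (A_ii = Â_ii for all i), whose diagonal entries are grouped into m consecutive blocks of sizes n_1,...,n_m such that within each block the diagonal value is constant and different blocks have distinct values. If U is unitary with ÂU = UA, then U is block diagonal: U = U_1 ⊕ ... ⊕ U_m with each U_i a unitary n_i × n_i matrix. -/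
open Matrix

/-- Two unitarily similar lower triangular matrices with the same block-constant diagonal
(consecutive blocks with distinct values) are similar via a block diagonal unitary. -/
theorem stmt2 {n m : ℕ} (A Ahat U : Matrix (Fin n) (Fin n) ℂ)
    (f : Fin n → Fin m) (hf : Monotone f)
    (dvals : Fin m → ℂ) (hd : Function.Injective dvals)
    (hA : ∀ i j : Fin n, i < j → A i j = 0)
    (hAhat : ∀ i j : Fin n, i < j → Ahat i j = 0)
    (hdiagA : ∀ i, A i i = dvals (f i))
    (hdiagAhat : ∀ i, Ahat i i = dvals (f i))
    (hU : U ∈ Matrix.unitaryGroup (Fin n) ℂ)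
    (hsim : Ahat * U = U * A) :
    (∀ i j : Fin n, f i ≠ f j → U i j = 0) ∧
    ∀ c : Fin m,
      (Matrix.of fun i j : {i : Fin n // f i = c} => U i.1 j.1) ∈
        Matrix.unitaryGroup {i : Fin n // f i = c} ℂ := by
  have key : ∀ N : ℕ, ∀ i j : Fin n, i.val + (n - j.val) ≤ N → f i < f j → U i j = 0 := by
    intro N
    induction N with
    | zero => intro i j hN _; have := j.isLt; omega
    | succ N ih =>
      intro i j hN hij
      have heq : (Ahat * U) i j = (U * A) i j := by rw [hsim]
      rw [mul_apply, mul_apply] at heq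
      have hL : ∑ k, Ahat i k * U k j = dvals (f i) * U i j := by
        rw [Finset.sum_eq_single i]
        · rw [hdiagAhat]
        · intro k _ hki
          rcases lt_or_gt_of_ne hki with h | h
          · have hk0 : U k j = 0 := by
              refine ih k j ?_ (lt_of_le_of_lt (hf h.le) hij)
              have hkv : k.val < i.val := h
              omega
            rw [hk0, mul_zero]
          · rw [hAhat i k h, zero_mul]
        · intro h; exact absurd (Finset.mem_univ i) h
      have hR : ∑ k, U i k * A k j = U i j * dvals (f j) := by
        rw [Finset.sum_eq_single j]
        · rw [hdiagA]
        · intro k _ hkj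
          rcases lt_or_gt_of_ne hkj with h | h
          · rw [hA k j h, mul_zero]
          · have hk0 : U i k = 0 := by
              refine ih i k ?_ (lt_of_lt_of_le hij (hf h.le))
              have hkv : j.val < k.val := h
              have := k.isLt
              omega
            rw [hk0, zero_mul]
        · intro h; exact absurd (Finset.mem_univ j) h
      rw [hL, hR] at heq
      have hne : dvals (f i) - dvals (f j) ≠ 0 := by
        intro h
        exact absurd (hd (sub_eq_zero.mp h)) hij.ne
      have hz : (dvals (f i) - dvals (f j)) * U i j = 0 := by linear_combination heq
      exact (mul_eq_zero.mp hz).resolve_left hne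
  have hzero : ∀ i j : Fin n, f i < f j → U i j = 0 := fun i j h =>
    key (i.val + n) i j (by omega) h
  have hBT : U.BlockTriangular (OrderDual.toDual ∘ f) := fun i j h => hzero i j h
  haveI : Invertible U := invertibleOfLeftInverse U (star U) (Matrix.mem_unitaryGroup_iff'.mp hU)
  have hBTinv := Matrix.blockTriangular_inv_of_blockTriangular hBT
  have hUinv : U⁻¹ = star U := Matrix.inv_eq_left_inv (Matrix.mem_unitaryGroup_iff'.mp hU)
  have hzero' : ∀ i j : Fin n, f j < f i → U i j = 0 := by
    intro i j h
    have h0 := hBTinv (i := j) (j := i) h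
    rw [hUinv, Matrix.star_apply] at h0
    simpa using h0
  have hmain : ∀ i j : Fin n, f i ≠ f j → U i j = 0 := by
    intro i j hne
    rcases lt_trichotomy (f i) (f j) with h | h | h
    · exact hzero i j h
    · exact absurd h hne
    · exact hzero' i j h
  refine ⟨hmain, fun c => ?_⟩
  rw [Matrix.mem_unitaryGroup_iff]
  ext i j
  have h1 : (U * star U) i.1 j.1 = (1 : Matrix (Fin n) (Fin n) ℂ) i.1 j.1 := by
    rw [Matrix.mem_unitaryGroup_iff.mp hU]
  rw [mul_apply] at h1
  have hvan : ∀ k ∈ Finset.univ, U i.1 k * (star U) k j.1 ≠ 0 → f k = c := by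
    intro k _ hk
    by_contra h
    apply hk
    rw [hmain i.1 k (by rw [i.2]; exact fun e => h e.symm), zero_mul]
  have h2 : ∑ k : Fin n, U i.1 k * (star U) k j.1
      = ∑ k : {i : Fin n // f i = c}, U i.1 k.1 * (star U) k.1 j.1 := by
    rw [← Finset.sum_filter_of_ne hvan, Finset.sum_subtype (p := fun k => f k = c) _ (by simp) _]
  rw [h2] at h1
  simp only [Matrix.mul_apply, Matrix.one_apply, Matrix.of_apply, Matrix.star_apply] at h1 ⊢
  rw [h1]
  simp [Subtype.ext_iff]
end

section
/- Let A be an n×n complex matrix with n distinct eigenvalues. If Â₁ and Â₂ are both lower triangular matrices unitarily similar to A with the same ordering of eigenvalues on the diagonal, then Â₂ = E Â₁ E* for some diagonal unitary matrix E. -/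
open Matrix

/-- If `Â₁` and `Â₂` are lower triangular matrices, both unitarily similar to a matrix `A`
with distinct eigenvalues, and they have the same diagonal (same eigenvalue ordering),
then `Â₂ = E Â₁ E*` for a diagonal unitary `E`. -/
theorem stmt3 {n : ℕ} (A A1 A2 U1 U2 : Matrix (Fin n) (Fin n) ℂ)
    (hU1 : U1 ∈ Matrix.unitaryGroup (Fin n) ℂ)
    (hU2 : U2 ∈ Matrix.unitaryGroup (Fin n) ℂ)
    (hA1 : A1 = U1 * A * U1ᴴ) (hA2 : A2 = U2 * A * U2ᴴ)
    (hLT1 : ∀ i j : Fin n, i < j → A1 i j = 0)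
    (hLT2 : ∀ i j : Fin n, i < j → A2 i j = 0)
    (hdiag : ∀ i : Fin n, A1 i i = A2 i i)
    (hdistinct : Function.Injective fun i : Fin n => A1 i i) :
    ∃ E : Matrix (Fin n) (Fin n) ℂ,
      E ∈ Matrix.unitaryGroup (Fin n) ℂ ∧ (∀ i j : Fin n, i ≠ j → E i j = 0) ∧
      A2 = E * A1 * Eᴴ := by
  set U : Matrix (Fin n) (Fin n) ℂ := U2 * U1ᴴ with hUdef
  have hU : U ∈ Matrix.unitaryGroup (Fin n) ℂ :=
    mul_mem hU2 (Unitary.star_mem hU1)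
  have h1 : U1ᴴ * U1 = 1 := by
    have := hU1.1; rwa [Matrix.star_eq_conjTranspose] at this
  have h2 : U2ᴴ * U2 = 1 := by
    have := hU2.1; rwa [Matrix.star_eq_conjTranspose] at this
  have hUU : Uᴴ * U = 1 := by
    have := hU.1; rwa [Matrix.star_eq_conjTranspose] at this
  have hUU' : U * Uᴴ = 1 := by
    have := hU.2; rwa [Matrix.star_eq_conjTranspose] at this
  -- intertwining relation
  have hAU : A2 * U = U * A1 := by
    rw [hA1, hA2, hUdef]
    calc U2 * A * U2ᴴ * (U2 * U1ᴴ)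
        = U2 * A * (U2ᴴ * U2) * U1ᴴ := by
          simp only [Matrix.mul_assoc]
      _ = U2 * ((U1ᴴ * U1) * (A * U1ᴴ)) := by rw [h1, h2]; simp [Matrix.mul_assoc]
      _ = U2 * U1ᴴ * (U1 * A * U1ᴴ) := by simp only [Matrix.mul_assoc]
  have hentry : ∀ i j : Fin n, ∑ k, A2 i k * U k j = ∑ k, U i k * A1 k j := by
    intro i j
    have := congrFun (congrFun hAU i) j
    simpa [Matrix.mul_apply] using this
  -- Claim 1: U is lower triangular
  have claim1 : ∀ i j : Fin n, i < j → U i j = 0 := by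
    have key : ∀ m : ℕ, ∀ i j : Fin n, i.val + (n - j.val) ≤ m → i < j → U i j = 0 := by
      intro m
      induction m with
      | zero =>
        intro i j hm hij
        have := j.isLt
        omega
      | succ m ih =>
        intro i j hm hij
        have e := hentry i j
        have hL : ∑ k, A2 i k * U k j = A2 i i * U i j := by
          apply Finset.sum_eq_single_of_mem i (Finset.mem_univ i)
          intro k _ hk
          rcases lt_or_gt_of_ne hk with h | h
          · -- k < i : U k j = 0 by ih
            have hkj : k < j := lt_trans h hij
            have : U k j = 0 := ih k j (by have := Fin.lt_iff_val_lt_val.mp h; omega) hkj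
            rw [this, mul_zero]
          · rw [hLT2 i k h, zero_mul]
        have hR : ∑ k, U i k * A1 k j = U i j * A1 j j := by
          apply Finset.sum_eq_single_of_mem j (Finset.mem_univ j)
          intro k _ hk
          rcases lt_or_gt_of_ne hk with h | h
          · rw [hLT1 k j h, mul_zero]
          · -- j < k : U i k = 0 by ih
            have hik : i < k := lt_trans hij h
            have : U i k = 0 := ih i k (by
              have hjk := Fin.lt_iff_val_lt_val.mp h
              have := k.isLt
              omega) hik
            rw [this, zero_mul]
        rw [hL, hR] at e
        have hne : A1 i i - A1 j j ≠ 0 := by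
          intro h
          exact (Fin.ne_of_lt hij) (hdistinct (by simpa using sub_eq_zero.mp h))
        have : U i j * (A1 i i - A1 j j) = 0 := by
          have e' : A1 i i * U i j = U i j * A1 j j := by rw [hdiag i]; exact e
          ring_nf
          linear_combination e'
        rcases mul_eq_zero.mp this with h | h
        · exact h
        · exact absurd h hne
    intro i j hij
    exact key (i.val + (n - j.val)) i j le_rfl hij
  -- Claim 2: U is diagonal
  have claim2 : ∀ j i : Fin n, i ≠ j → U i j = 0 := by
    have key : ∀ m : ℕ, ∀ j : Fin n, j.val < m → ∀ i, i ≠ j → U i j = 0 := by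
      intro m
      induction m with
      | zero => intro j hj; omega
      | succ m ih =>
        intro j hj i hij
        -- row j of U has only the diagonal entry
        have hrow : ∀ k, k ≠ j → U j k = 0 := by
          intro k hk
          rcases lt_or_gt_of_ne hk with h | h
          · exact ih k (by have := Fin.lt_iff_val_lt_val.mp h; omega) j (Fin.ne_of_gt h)
          · exact claim1 j k h
        have hdiagU : Complex.normSq (U j j) = 1 := by
          have hr := congrFun (congrFun hUU' j) j
          simp only [Matrix.mul_apply, Matrix.conjTranspose_apply, Matrix.one_apply_eq] at hr
          rw [Finset.sum_eq_single_of_mem j (Finset.mem_univ j)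
            (fun k _ hk => by rw [hrow k hk, zero_mul])] at hr
          have : (Complex.normSq (U j j) : ℂ) = 1 := by
            rw [Complex.normSq_eq_conj_mul_self]; rw [mul_comm] at hr; exact hr
          exact_mod_cast this
        -- column j sum
        have hc := congrFun (congrFun hUU j) j
        simp only [Matrix.mul_apply, Matrix.conjTranspose_apply, Matrix.one_apply_eq] at hc
        have hc' : (↑(∑ k, Complex.normSq (U k j)) : ℂ) = 1 := by
          push_cast
          rw [← hc]
          refine Finset.sum_congr rfl fun k _ => ?_
          rw [Complex.normSq_eq_conj_mul_self]
          rfl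
        have hcr : ∑ k, Complex.normSq (U k j) = 1 := by exact_mod_cast hc'
        have hsplit := Finset.add_sum_erase Finset.univ
          (fun k => Complex.normSq (U k j)) (Finset.mem_univ j)
        have hzero : ∑ k ∈ Finset.univ.erase j, Complex.normSq (U k j) = 0 := by
          simp only [hdiagU, hcr] at hsplit
          linarith
        have := (Finset.sum_eq_zero_iff_of_nonneg
          (fun k _ => Complex.normSq_nonneg (U k j))).mp hzero i
          (Finset.mem_erase.mpr ⟨hij, Finset.mem_univ i⟩)
        exact Complex.normSq_eq_zero.mp this
    intro j i hij
    exact key (j.val + 1) j (Nat.lt_succ_self _) i hij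
  refine ⟨U, hU, fun i j h => claim2 j i h, ?_⟩
  calc A2 = A2 * (U * Uᴴ) := by rw [hUU', Matrix.mul_one]
    _ = (A2 * U) * Uᴴ := (Matrix.mul_assoc A2 U Uᴴ).symm
    _ = U * A1 * Uᴴ := by rw [hAU]
end

section
/- Let (A,B) be a lower triangular input normal pair (A lower triangular, AA* + BB* = I_n) with I_n − BB* of rank n. Then A = L E where L is the Cholesky factor of I_n − BB* (lower triangular with positive diagonal) and E is a diagonal unitary matrix. -/
open Matrix

/-- For a lower triangular input normal pair `(A,B)` with `I − BB*` of full rank,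
`A = L E` with `L` the Cholesky factor of `I − BB*` and `E` diagonal unitary. -/
theorem stmt4 {n d : ℕ} (A : Matrix (Fin n) (Fin n) ℂ) (B : Matrix (Fin n) (Fin d) ℂ)
    (hLT : ∀ i j : Fin n, i < j → A i j = 0)
    (hIN : A * Aᴴ + B * Bᴴ = 1)
    (hrank : (1 - B * Bᴴ).rank = n) :
    ∃ L E : Matrix (Fin n) (Fin n) ℂ,
      (∀ i j : Fin n, i < j → L i j = 0) ∧
      (∀ i : Fin n, 0 < (L i i).re ∧ (L i i).im = 0) ∧
      L * Lᴴ = 1 - B * Bᴴ ∧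
      E ∈ Matrix.unitaryGroup (Fin n) ℂ ∧
      (∀ i j : Fin n, i ≠ j → E i j = 0) ∧
      A = L * E := by
  have hAA : A * Aᴴ = 1 - B * Bᴴ := eq_sub_of_add_eq hIN
  -- `A * Aᴴ` is a unit
  have hUnitAA : IsUnit (A * Aᴴ) := by
    rw [← Matrix.mulVec_surjective_iff_isUnit]
    have hr : (A * Aᴴ).rank = n := by rw [hAA, hrank]
    have htop : LinearMap.range (A * Aᴴ).mulVecLin = ⊤ := by
      apply Submodule.eq_top_of_finrank_eq
      rw [← Matrix.rank, hr, Module.finrank_fin_fun]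
    intro v
    have := LinearMap.range_eq_top.mp htop v
    simpa using this
  -- `A` is a unit, via determinants
  have hUnitA : IsUnit A := by
    rw [Matrix.isUnit_iff_isUnit_det] at hUnitAA ⊢
    rw [Matrix.det_mul] at hUnitAA
    exact isUnit_of_mul_isUnit_left hUnitAA
  -- diagonal entries of `A` are nonzero
  have hdiag : ∀ i : Fin n, A i i ≠ 0 := by
    have hdet : A.det = ∏ i, A i i :=
      Matrix.det_of_lowerTriangular A (fun i j h => hLT i j h)
    intro i hi
    have : IsUnit A.det := (Matrix.isUnit_iff_isUnit_det A).mp hUnitA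
    rw [hdet] at this
    have h0 : (∏ j, A j j) ≠ 0 := this.ne_zero
    exact h0 (Finset.prod_eq_zero (Finset.mem_univ i) hi)
  -- the phase of each diagonal entry
  set e : Fin n → ℂ := fun i => A i i / (‖A i i‖ : ℂ) with he
  have hnorm : ∀ i, ‖e i‖ = 1 := by
    intro i
    have : ‖A i i‖ ≠ 0 := norm_ne_zero_iff.mpr (hdiag i)
    rw [he]
    simp only [norm_div, Complex.norm_real, norm_norm]
    exact div_self this
  have hconj : ∀ i, e i * (starRingEnd ℂ) (e i) = 1 := by
    intro i
    rw [Complex.mul_conj, Complex.normSq_eq_norm_sq, hnorm]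
    norm_num
  set E : Matrix (Fin n) (Fin n) ℂ := Matrix.diagonal e with hE
  have hEH : Eᴴ = Matrix.diagonal (fun i => (starRingEnd ℂ) (e i)) := by
    rw [hE, Matrix.diagonal_conjTranspose]
    rfl
  have hEEH : E * Eᴴ = 1 := by
    rw [hEH, hE, Matrix.diagonal_mul_diagonal]
    ext i j
    rcases eq_or_ne i j with rfl | h
    · simp [hconj i]
    · simp [Matrix.diagonal_apply_ne _ h, Matrix.one_apply_ne h]
  have hEHE : Eᴴ * E = 1 := by
    rw [hEH, hE, Matrix.diagonal_mul_diagonal]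
    ext i j
    rcases eq_or_ne i j with rfl | h
    · simp [mul_comm, hconj i]
    · simp [Matrix.diagonal_apply_ne _ h, Matrix.one_apply_ne h]
  refine ⟨A * Eᴴ, E, ?_, ?_, ?_, ?_, ?_, ?_⟩
  · intro i j hij
    rw [hEH, Matrix.mul_diagonal, hLT i j hij, zero_mul]
  · intro i
    have : (A * Eᴴ) i i = ((‖A i i‖ : ℝ) : ℂ) := by
      rw [hEH, Matrix.mul_diagonal, he]
      rw [map_div₀, Complex.conj_ofReal, mul_div_assoc', Complex.mul_conj,
        Complex.normSq_eq_norm_sq]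
      rw [div_eq_iff (by exact_mod_cast norm_ne_zero_iff.mpr (hdiag i))]
      push_cast
      ring
    rw [this]
    constructor
    · simp only [Complex.ofReal_re]
      exact norm_pos_iff.mpr (hdiag i)
    · simp
  · rw [Matrix.conjTranspose_mul, Matrix.conjTranspose_conjTranspose,
      mul_assoc, ← mul_assoc Eᴴ, hEHE, one_mul, hAA]
  · rw [Matrix.mem_unitaryGroup_iff]
    exact hEEH
  · intro i j hij
    rw [hE]
    exact Matrix.diagonal_apply_ne e hij
  · rw [mul_assoc, hEHE, mul_one]
end

section
/- With M, N as in the bidiagonal construction (M unit lower bidiagonal with subdiagonal γ_k = λ_k* ρ_{k+1}/ρ_k; N lower bidiagonal with diagonal λ_k and subdiagonal μ_k = ρ_{k+1}/ρ_k, where ρ_k = sqrt(1−|λ_k|²) and |λ_k| < 1), set Â = M⁻¹N and B̂ = ρ_1 M⁻¹ e_1. Then Â is lower triangular, ÂÂ* + B̂B̂* = I_n, and the eigenvalues of Â are exactly λ_1,...,λ_n. -/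
open Matrix

/-- Sum of a function supported on `{i, i-1}`. -/
lemma sum_two {n : ℕ} (f : Fin n → ℂ) (i : Fin n)
    (hf : ∀ k : Fin n, k ≠ i → (i : ℕ) ≠ (k : ℕ) + 1 → f k = 0) :
    ∑ k, f k = f i + (if h : 0 < (i : ℕ) then f ⟨(i : ℕ) - 1, by omega⟩ else 0) := by
  by_cases h : 0 < (i : ℕ)
  · rw [dif_pos h]
    set j : Fin n := ⟨(i : ℕ) - 1, by have := i.isLt; omega⟩ with hj
    have hij : i ≠ j := by
      intro hc
      have := congrArg Fin.val hc
      simp [hj] at this; omega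
    have : ∑ k, f k = ∑ k ∈ ({i, j} : Finset (Fin n)), f k := by
      refine (Finset.sum_subset (Finset.subset_univ _) ?_).symm
      intro x _ hx
      simp only [Finset.mem_insert, Finset.mem_singleton, not_or] at hx
      refine hf x hx.1 ?_
      intro hc
      exact hx.2 (Fin.ext (by simp [hj]; omega))
    rw [this, Finset.sum_pair hij]
  · rw [dif_neg h]
    rw [Finset.sum_eq_single i (fun k _ hk => hf k hk (by omega)) (by simp)]
    ring

/-- With bidiagonal `M`, `N` built from `|λ_k| < 1`, the pair
`Â = M⁻¹N`, `B̂ = ρ_1 M⁻¹ e_1` is triangular input normal with eigenvalues `λ_1,…,λ_n`. -/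
theorem stmt6 {n : ℕ} (hn : 0 < n) (lam : Fin n → ℂ) (hlam : ∀ k, ‖lam k‖ < 1)
    (ρ : Fin n → ℝ) (hρ : ∀ k, ρ k = Real.sqrt (1 - ‖lam k‖ ^ 2))
    (M N : Matrix (Fin n) (Fin n) ℂ)
    (hM : M = Matrix.of fun i j : Fin n =>
      if i = j then 1
      else if (i : ℕ) = (j : ℕ) + 1 then
        (starRingEnd ℂ) (lam j) * ((ρ i : ℂ) / (ρ j : ℂ))
      else 0)
    (hN : N = Matrix.of fun i j : Fin n =>
      if i = j then lam i
      else if (i : ℕ) = (j : ℕ) + 1 then ((ρ i : ℂ) / (ρ j : ℂ))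
      else 0)
    (Ahat : Matrix (Fin n) (Fin n) ℂ) (hAhat : Ahat = M⁻¹ * N)
    (Bhat : Matrix (Fin n) (Fin 1) ℂ)
    (hBhat : Bhat = (ρ ⟨0, hn⟩ : ℂ) •
      (M⁻¹ * Matrix.of fun (i : Fin n) (_ : Fin 1) => if (i : ℕ) = 0 then (1 : ℂ) else 0)) :
    (∀ i j : Fin n, i < j → Ahat i j = 0) ∧
    Ahat * Ahatᴴ + Bhat * Bhatᴴ = 1 ∧
    spectrum ℂ Ahat = Set.range lam := by
  -- basic facts about ρ
  have hρpos : ∀ k, 0 < ρ k := by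
    intro k
    rw [hρ k]
    have h1 : ‖lam k‖ ^ 2 < 1 := by
      have := hlam k
      nlinarith [norm_nonneg (lam k)]
    exact Real.sqrt_pos.mpr (by linarith)
  have hρsq : ∀ k, (ρ k : ℂ) ^ 2 = 1 - (‖lam k‖ : ℂ) ^ 2 := by
    intro k
    have h1 : ‖lam k‖ ^ 2 < 1 := by
      have := hlam k
      nlinarith [norm_nonneg (lam k)]
    have : (ρ k) ^ 2 = 1 - ‖lam k‖ ^ 2 := by
      rw [hρ k, Real.sq_sqrt (by linarith)]
    calc ((ρ k : ℝ) : ℂ) ^ 2 = ((ρ k ^ 2 : ℝ) : ℂ) := by push_cast; ring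
      _ = 1 - (‖lam k‖ : ℂ) ^ 2 := by rw [this]; push_cast; ring
  have hρne : ∀ k, (ρ k : ℂ) ≠ 0 := fun k =>
    Complex.ofReal_ne_zero.mpr (ne_of_gt (hρpos k))
  have hmulconj : ∀ k, lam k * (starRingEnd ℂ) (lam k) = (‖lam k‖ : ℂ) ^ 2 := by
    intro k
    rw [Complex.mul_conj]
    rw [Complex.normSq_eq_norm_sq]
    push_cast
    norm_num
  -- triangularity of M, N
  have hMtri : M.BlockTriangular OrderDual.toDual := by
    intro i j hij
    have hij' : i < j := hij
    rw [hM]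
    simp only [Matrix.of_apply]
    rw [if_neg (by exact fun hc => absurd hc (ne_of_lt hij')),
      if_neg (by have := hij'; omega)]
  have hNtri : N.BlockTriangular OrderDual.toDual := by
    intro i j hij
    have hij' : i < j := hij
    rw [hN]
    simp only [Matrix.of_apply]
    rw [if_neg (by exact fun hc => absurd hc (ne_of_lt hij')),
      if_neg (by have := hij'; omega)]
  have hMdiag : ∀ i, M i i = 1 := by intro i; rw [hM]; simp
  have hMdet : M.det = 1 := by
    rw [Matrix.det_of_lowerTriangular M hMtri]
    exact Finset.prod_eq_one fun i _ => hMdiag i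
  have hMunit : IsUnit M.det := by rw [hMdet]; exact isUnit_one
  haveI : Invertible M := M.invertibleOfIsUnitDet hMunit
  have hMinvtri : M⁻¹.BlockTriangular OrderDual.toDual :=
    Matrix.blockTriangular_inv_of_blockTriangular hMtri
  have hAtri : Ahat.BlockTriangular OrderDual.toDual := by
    rw [hAhat]; exact hMinvtri.mul hNtri
  have part1 : ∀ i j : Fin n, i < j → Ahat i j = 0 := by
    intro i j hij
    exact hAtri (show OrderDual.toDual j < OrderDual.toDual i from hij)
  -- diagonal of Ahat
  have hMA : M * Ahat = N := by
    rw [hAhat, ← Matrix.mul_assoc, Matrix.mul_nonsing_inv M hMunit, Matrix.one_mul]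
  have hAdiag : ∀ i, Ahat i i = lam i := by
    intro i
    have h1 : N i i = ∑ k, M i k * Ahat k i := by rw [← hMA, Matrix.mul_apply]
    rw [sum_two (fun k => M i k * Ahat k i) i (by
      intro k hk hk2
      have : M i k = 0 := by
        rw [hM]; simp only [Matrix.of_apply]
        rw [if_neg (fun hc => hk (hc.symm)), if_neg hk2]
      simp [this])] at h1
    have hNii : N i i = lam i := by rw [hN]; simp
    rw [hNii, hMdiag i, one_mul] at h1
    by_cases h : 0 < (i : ℕ)
    · rw [dif_pos h] at h1
      have hz : Ahat ⟨(i : ℕ) - 1, by have := i.isLt; omega⟩ i = 0 :=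
        part1 _ _ (by simp [Fin.lt_def]; omega)
      rw [hz, mul_zero, add_zero] at h1
      exact h1.symm
    · rw [dif_neg h, add_zero] at h1
      exact h1.symm
  refine ⟨part1, ?_, ?_⟩
  · -- input normality
    -- the key entrywise identity : M * Mᴴ = N * Nᴴ + ρ₀² • E
    set e : Matrix (Fin n) (Fin 1) ℂ :=
      Matrix.of fun (i : Fin n) (_ : Fin 1) => if (i : ℕ) = 0 then (1 : ℂ) else 0 with he
    have key : M * Mᴴ = N * Nᴴ + ((ρ ⟨0, hn⟩ : ℂ) ^ 2) • (e * eᴴ) := by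
      ext i j
      have hL : (M * Mᴴ) i j = ∑ k, M i k * (starRingEnd ℂ) (M j k) := by
        rw [Matrix.mul_apply]; simp [Matrix.conjTranspose_apply]
      have hR : (N * Nᴴ) i j = ∑ k, N i k * (starRingEnd ℂ) (N j k) := by
        rw [Matrix.mul_apply]; simp [Matrix.conjTranspose_apply]
      have hEe : (e * eᴴ) i j = (if (i : ℕ) = 0 then (1:ℂ) else 0) *
          (if (j : ℕ) = 0 then (1:ℂ) else 0) := by
        rw [Matrix.mul_apply]
        simp [he, Matrix.conjTranspose_apply, apply_ite (starRingEnd ℂ)]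
      rw [Matrix.add_apply, Matrix.smul_apply, hL, hR, hEe]
      rw [sum_two (fun k => M i k * (starRingEnd ℂ) (M j k)) i (by
        intro k hk hk2
        have : M i k = 0 := by
          rw [hM]; simp only [Matrix.of_apply]
          rw [if_neg (fun hc => hk hc.symm), if_neg hk2]
        simp [this])]
      rw [sum_two (fun k => N i k * (starRingEnd ℂ) (N j k)) i (by
        intro k hk hk2
        have : N i k = 0 := by
          rw [hN]; simp only [Matrix.of_apply]
          rw [if_neg (fun hc => hk hc.symm), if_neg hk2]
        simp [this])]
      -- entrywise formulas with ℕ-valued conditions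
      have hMe : ∀ a b : Fin n, M a b =
          if (a : ℕ) = (b : ℕ) then 1
          else if (a : ℕ) = (b : ℕ) + 1 then
            (starRingEnd ℂ) (lam b) * ((ρ a : ℂ) / (ρ b : ℂ)) else 0 := by
        intro a b
        rw [hM]
        simp only [Matrix.of_apply, Fin.ext_iff]
      have hNe : ∀ a b : Fin n, N a b =
          if (a : ℕ) = (b : ℕ) then lam a
          else if (a : ℕ) = (b : ℕ) + 1 then ((ρ a : ℂ) / (ρ b : ℂ)) else 0 := by
        intro a b
        rw [hN]
        simp only [Matrix.of_apply, Fin.ext_iff]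
      by_cases h : 0 < (i : ℕ)
      · rw [dif_pos h, dif_pos h]
        set i' : Fin n := ⟨(i : ℕ) - 1, by have := i.isLt; omega⟩ with hi'
        have hvi' : (i' : ℕ) = (i : ℕ) - 1 := rfl
        have hE : (if (i : ℕ) = 0 then (1:ℂ) else 0) * (if (j : ℕ) = 0 then (1:ℂ) else 0)
            = 0 := by rw [if_neg (by omega), zero_mul]
        have hMii : M i i = 1 := by rw [hMe]; rw [if_pos rfl]
        have hNii : N i i = lam i := by rw [hNe]; rw [if_pos rfl]
        have hMii' : M i i' = (starRingEnd ℂ) (lam i') * ((ρ i : ℂ) / (ρ i' : ℂ)) := by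
          rw [hMe]; rw [if_neg (by omega), if_pos (by omega)]
        have hNii' : N i i' = ((ρ i : ℂ) / (ρ i' : ℂ)) := by
          rw [hNe]; rw [if_neg (by omega), if_pos (by omega)]
        rcases lt_trichotomy (i : ℕ) (j : ℕ) with hij | hij | hij
        · by_cases hj1 : (j : ℕ) = (i : ℕ) + 1
          · -- superdiagonal
            have h1 : M j i = (starRingEnd ℂ) (lam i) * ((ρ j : ℂ) / (ρ i : ℂ)) := by
              rw [hMe]; rw [if_neg (by omega), if_pos (by omega)]
            have h2 : M j i' = 0 := by
              rw [hMe]; rw [if_neg (by omega), if_neg (by omega)]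
            have h3 : N j i = ((ρ j : ℂ) / (ρ i : ℂ)) := by
              rw [hNe]; rw [if_neg (by omega), if_pos (by omega)]
            have h4 : N j i' = 0 := by
              rw [hNe]; rw [if_neg (by omega), if_neg (by omega)]
            rw [h1, h2, h3, h4, hMii, hNii, hE]
            simp only [_root_.map_mul, map_div₀, Complex.conj_conj, Complex.conj_ofReal,
              map_zero, mul_zero, add_zero, one_mul, smul_eq_mul]
            try ring
          · -- far above diagonal : everything vanishes
            have h1 : M j i = 0 := by
              rw [hMe]; rw [if_neg (by omega), if_neg (by omega)]
            have h2 : M j i' = 0 := by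
              rw [hMe]; rw [if_neg (by omega), if_neg (by omega)]
            have h3 : N j i = 0 := by
              rw [hNe]; rw [if_neg (by omega), if_neg (by omega)]
            have h4 : N j i' = 0 := by
              rw [hNe]; rw [if_neg (by omega), if_neg (by omega)]
            rw [h1, h2, h3, h4, hE]
            simp
        · -- diagonal, i = j with 0 < i
          have hji : j = i := Fin.ext hij.symm
          subst hji
          rw [hMii, hNii, hMii', hNii', hE]
          simp only [_root_.map_one, _root_.map_mul, map_div₀, Complex.conj_conj,
            Complex.conj_ofReal, smul_eq_mul, mul_zero, add_zero, mul_one, one_mul]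
          have e1 := hρsq j
          have e2 := hρsq i'
          have e3 := hmulconj j
          have e4 := hmulconj i'
          have hne1 := hρne j
          have hne2 := hρne i'
          field_simp
          linear_combination (1 - lam j * (starRingEnd ℂ) (lam j)) * e2
            - (1 - lam i' * (starRingEnd ℂ) (lam i')) * e1
            - (1 - (‖lam i'‖ : ℂ) ^ 2) * e3 + (1 - (‖lam j‖ : ℂ) ^ 2) * e4
        · by_cases hj1 : (i : ℕ) = (j : ℕ) + 1
          · -- subdiagonal : j = i'
            have hji' : j = i' := Fin.ext (by omega)
            have h1 : M j i = 0 := by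
              rw [hMe]; rw [if_neg (by omega), if_neg (by omega)]
            have h2 : M j i' = 1 := by rw [hMe]; rw [if_pos (by omega)]
            have h3 : N j i = 0 := by
              rw [hNe]; rw [if_neg (by omega), if_neg (by omega)]
            have h4 : N j i' = lam j := by rw [hNe]; rw [if_pos (by omega)]
            rw [h1, h2, h3, h4, hMii, hNii, hMii', hNii', hE, hji']
            simp only [_root_.map_one, map_zero, mul_zero, zero_add, mul_one, smul_eq_mul,
              add_zero, one_mul]
            try ring
          · -- far below diagonal
            have h1 : M j i = 0 := by
              rw [hMe]; rw [if_neg (by omega), if_neg (by omega)]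
            have h2 : M j i' = 0 := by
              rw [hMe]; rw [if_neg (by omega), if_neg (by omega)]
            have h3 : N j i = 0 := by
              rw [hNe]; rw [if_neg (by omega), if_neg (by omega)]
            have h4 : N j i' = 0 := by
              rw [hNe]; rw [if_neg (by omega), if_neg (by omega)]
            rw [h1, h2, h3, h4, hE]
            simp
      · -- first row : i = 0
        rw [dif_neg h, dif_neg h]
        have hi0 : i = ⟨0, hn⟩ := Fin.ext (by simpa using by omega)
        have hMii : M i i = 1 := by rw [hMe]; rw [if_pos rfl]
        have hNii : N i i = lam i := by rw [hNe]; rw [if_pos rfl]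
        rcases Nat.lt_or_ge (j : ℕ) 1 with hj | hj
        · have hji : j = i := Fin.ext (by omega)
          subst hji
          rw [hMii, hNii, if_pos (by omega : (j : ℕ) = 0)]
          rw [hi0]
          simp only [add_zero, _root_.map_one, mul_one, one_mul, smul_eq_mul]
          have e1 := hρsq ⟨0, hn⟩
          have e3 := hmulconj ⟨0, hn⟩
          linear_combination -e3 - e1
        · by_cases hj1 : (j : ℕ) = (i : ℕ) + 1
          · have h1 : M j i = (starRingEnd ℂ) (lam i) * ((ρ j : ℂ) / (ρ i : ℂ)) := by
              rw [hMe]; rw [if_neg (by omega), if_pos (by omega)]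
            have h3 : N j i = ((ρ j : ℂ) / (ρ i : ℂ)) := by
              rw [hNe]; rw [if_neg (by omega), if_pos (by omega)]
            rw [h1, h3, hMii, hNii, if_neg (by omega : ¬ (j : ℕ) = 0)]
            simp only [_root_.map_mul, map_div₀, Complex.conj_conj, Complex.conj_ofReal,
              mul_zero, add_zero, one_mul, smul_eq_mul]
            try ring
          · have h1 : M j i = 0 := by
              rw [hMe]; rw [if_neg (by omega), if_neg (by omega)]
            have h3 : N j i = 0 := by
              rw [hNe]; rw [if_neg (by omega), if_neg (by omega)]
            rw [h1, h3, if_neg (by omega : ¬ (j : ℕ) = 0)]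
            simp
    -- deduce the input normal identity
    have hMHdet : IsUnit Mᴴ.det := by
      rw [Matrix.det_conjTranspose, hMdet]; simp
    have hBB : Bhat * Bhatᴴ =
        ((ρ ⟨0, hn⟩ : ℂ) ^ 2) • (M⁻¹ * (e * eᴴ) * M⁻¹ᴴ) := by
      rw [hBhat, Matrix.conjTranspose_smul, Matrix.smul_mul, Matrix.mul_smul, smul_smul,
        Complex.star_def, Complex.conj_ofReal, ← sq, Matrix.conjTranspose_mul]
      congr 1
      simp [Matrix.mul_assoc]
    rw [hAhat, hBB, Matrix.conjTranspose_mul]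
    calc M⁻¹ * N * (Nᴴ * M⁻¹ᴴ) + ((ρ ⟨0, hn⟩ : ℂ) ^ 2) • (M⁻¹ * (e * eᴴ) * M⁻¹ᴴ)
        = M⁻¹ * (N * Nᴴ + ((ρ ⟨0, hn⟩ : ℂ) ^ 2) • (e * eᴴ)) * M⁻¹ᴴ := by
          simp only [Matrix.mul_add, Matrix.add_mul, Matrix.mul_smul, Matrix.smul_mul,
            Matrix.mul_assoc]
      _ = M⁻¹ * (M * Mᴴ) * M⁻¹ᴴ := by rw [key]
      _ = 1 := by
          rw [Matrix.conjTranspose_nonsing_inv, ← Matrix.mul_assoc M⁻¹ M Mᴴ,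
            Matrix.nonsing_inv_mul M hMunit, Matrix.one_mul,
            Matrix.mul_nonsing_inv Mᴴ hMHdet]
  · -- spectrum
    ext μ
    rw [spectrum.mem_iff, Matrix.isUnit_iff_isUnit_det]
    have htri : (algebraMap ℂ (Matrix (Fin n) (Fin n) ℂ) μ - Ahat).BlockTriangular
        OrderDual.toDual := by
      intro i j hij
      have hij' : i < j := hij
      rw [Matrix.sub_apply, Matrix.algebraMap_matrix_apply,
        if_neg (fun hc : i = j => absurd hc (ne_of_lt hij')), part1 i j hij', sub_zero]
    rw [Matrix.det_of_lowerTriangular _ htri]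
    have hdiag : ∀ i, (algebraMap ℂ (Matrix (Fin n) (Fin n) ℂ) μ - Ahat) i i = μ - lam i := by
      intro i
      simp [Matrix.sub_apply, Matrix.algebraMap_matrix_apply, hAdiag]
    simp only [hdiag]
    rw [isUnit_iff_ne_zero, not_not, Finset.prod_eq_zero_iff]
    constructor
    · rintro ⟨i, -, hi⟩
      exact ⟨i, by linear_combination -hi⟩
    · rintro ⟨i, hi⟩
      exact ⟨i, Finset.mem_univ i, by rw [← hi]; ring⟩
end

section
/- Let λ_1,...,λ_n satisfy |λ_1| ≤ |λ_2| ≤ ... ≤ |λ_n| < 1, and let M be the unit lower bidiagonal matrix with subdiagonal entries λ_k* sqrt((1−|λ_{k+1}|²)/(1−|λ_k|²)). Then every entry of M⁻¹ has modulus < 1 for i > j, and the 2-norm condition number satisfies κ₂(M) ≤ 2n. -/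
open Matrix Finset
open scoped Matrix.Norms.L2Operator

/-- Schur test: `‖A‖₂ ≤ √(r c)` where `r` bounds row sums and `c` bounds column sums. -/
lemma schur_bound {m n : ℕ} (A : Matrix (Fin m) (Fin n) ℂ) (r c : ℝ)
    (hr0 : 0 ≤ r) (hc0 : 0 ≤ c)
    (hr : ∀ i, ∑ j, ‖A i j‖ ≤ r) (hc : ∀ j, ∑ i, ‖A i j‖ ≤ c) :
    ‖A‖ ≤ Real.sqrt (r * c) := by
  rw [Matrix.l2_opNorm_def]
  apply ContinuousLinearMap.opNorm_le_bound _ (Real.sqrt_nonneg _)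
  intro x
  have hx : x = (WithLp.equiv 2 _).symm ((WithLp.equiv 2 _) x) := rfl
  rw [LinearEquiv.trans_apply, LinearMap.coe_toContinuousLinearMap']
  rw [hx, show toEuclideanLin A ((WithLp.equiv 2 (Fin n → ℂ)).symm ((WithLp.equiv 2 (Fin n → ℂ)) x))
      = (WithLp.equiv 2 (Fin m → ℂ)).symm (toLin' A ((WithLp.equiv 2 (Fin n → ℂ)) x)) from rfl]
  set y : Fin n → ℂ := (WithLp.equiv 2 _) x with hy
  have hnx : ‖x‖ = Real.sqrt (∑ j, ‖y j‖ ^ 2) := by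
    rw [EuclideanSpace.norm_eq]; rfl
  have hnAx : ‖(WithLp.equiv 2 (Fin m → ℂ)).symm (A *ᵥ y)‖
      = Real.sqrt (∑ i, ‖(A *ᵥ y) i‖ ^ 2) := by
    rw [EuclideanSpace.norm_eq]
    rfl
  rw [show (toLin' A) y = A *ᵥ y from Matrix.toLin'_apply A y, ← hx, hnAx, hnx]
  have key : ∑ i, ‖(A *ᵥ y) i‖ ^ 2 ≤ r * c * ∑ j, ‖y j‖ ^ 2 := by
    have step1 : ∀ i, ‖(A *ᵥ y) i‖ ^ 2 ≤ r * ∑ j, ‖A i j‖ * ‖y j‖ ^ 2 := by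
      intro i
      have h1 : ‖(A *ᵥ y) i‖ ≤ ∑ j, ‖A i j‖ * ‖y j‖ := by
        simp only [Matrix.mulVec, dotProduct]
        refine (norm_sum_le _ _).trans ?_
        exact Finset.sum_le_sum fun j _ => (norm_mul_le _ _)
      have h2 : (∑ j, ‖A i j‖ * ‖y j‖) ^ 2 ≤
          (∑ j, ‖A i j‖) * (∑ j, ‖A i j‖ * ‖y j‖ ^ 2) := by
        refine Finset.sum_sq_le_sum_mul_sum_of_sq_eq_mul _ ?_ ?_ ?_
        · exact fun j _ => norm_nonneg _
        · exact fun j _ => mul_nonneg (norm_nonneg _) (sq_nonneg _)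
        · intro j _; ring
      have h3 : ‖(A *ᵥ y) i‖ ^ 2 ≤ (∑ j, ‖A i j‖ * ‖y j‖) ^ 2 := by
        apply pow_le_pow_left₀ (norm_nonneg _) h1
      refine h3.trans (h2.trans ?_)
      apply mul_le_mul_of_nonneg_right (hr i)
      exact Finset.sum_nonneg fun j _ => mul_nonneg (norm_nonneg _) (sq_nonneg _)
    calc ∑ i, ‖(A *ᵥ y) i‖ ^ 2 ≤ ∑ i, r * ∑ j, ‖A i j‖ * ‖y j‖ ^ 2 :=
          Finset.sum_le_sum fun i _ => step1 i
      _ = r * ∑ j, (∑ i, ‖A i j‖) * ‖y j‖ ^ 2 := by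
          rw [← Finset.mul_sum, Finset.sum_comm]
          simp_rw [Finset.sum_mul]
      _ ≤ r * ∑ j, c * ‖y j‖ ^ 2 := by
          apply mul_le_mul_of_nonneg_left _ hr0
          exact Finset.sum_le_sum fun j _ =>
            mul_le_mul_of_nonneg_right (hc j) (sq_nonneg _)
      _ = r * c * ∑ j, ‖y j‖ ^ 2 := by rw [← Finset.mul_sum]; ring
  calc Real.sqrt (∑ i, ‖(A *ᵥ y) i‖ ^ 2) ≤ Real.sqrt (r * c * ∑ j, ‖y j‖ ^ 2) :=
        Real.sqrt_le_sqrt key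
    _ = Real.sqrt (r * c) * Real.sqrt (∑ j, ‖y j‖ ^ 2) :=
        Real.sqrt_mul (mul_nonneg hr0 hc0) _

lemma sum_indicator_le_one {n : ℕ} (P : Fin n → Prop) [DecidablePred P]
    (h : ∀ a b, P a → P b → a = b) : (∑ x, if P x then (1:ℝ) else 0) ≤ 1 := by
  rw [Finset.sum_boole]
  have hc : (Finset.filter P Finset.univ).card ≤ 1 :=
    Finset.card_le_one.2 fun a ha b hb =>
      h a b (Finset.mem_filter.1 ha).2 (Finset.mem_filter.1 hb).2
  exact_mod_cast hc

/-- If the eigenvalue magnitudes are ascending, every strictly lower entry of `M⁻¹` has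
modulus `< 1` and the 2-norm condition number satisfies `κ₂(M) ≤ 2n`. -/
theorem stmt8 {n : ℕ} (lam : Fin n → ℂ) (hlam : ∀ k, ‖lam k‖ < 1)
    (hmono : Monotone fun k : Fin n => ‖lam k‖)
    (M : Matrix (Fin n) (Fin n) ℂ)
    (hM : M = Matrix.of fun i j : Fin n =>
      if i = j then 1
      else if (i : ℕ) = (j : ℕ) + 1 then
        (starRingEnd ℂ) (lam j) *
          (Real.sqrt ((1 - ‖lam i‖ ^ 2) / (1 - ‖lam j‖ ^ 2)) : ℂ)
      else 0) :
    (∀ i j : Fin n, j < i → ‖M⁻¹ i j‖ < 1) ∧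
    ‖M‖ * ‖M⁻¹‖ ≤ 2 * n := by
  classical
  set d : ℕ → ℂ := fun k => if h : k + 1 < n then
      (starRingEnd ℂ) (lam ⟨k, Nat.lt_of_succ_lt h⟩) *
        (Real.sqrt ((1 - ‖lam ⟨k+1, h⟩‖ ^ 2) / (1 - ‖lam ⟨k, Nat.lt_of_succ_lt h⟩‖ ^ 2)) : ℂ)
    else 0 with hd
  have hdnorm : ∀ k, ‖d k‖ < 1 := by
    intro k
    by_cases h : k + 1 < n
    · have hk : k < n := Nat.lt_of_succ_lt h
      set a := ‖lam ⟨k+1, h⟩‖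
      set b := ‖lam ⟨k, hk⟩‖
      have hba : b ≤ a := hmono (by exact Fin.mk_le_mk.2 (Nat.le_succ k))
      have ha1 : a < 1 := hlam _
      have hb0 : (0:ℝ) ≤ b := norm_nonneg _
      have hb1 : b < 1 := lt_of_le_of_lt hba ha1
      have hden : 0 < 1 - b ^ 2 := by nlinarith
      have hratio : (1 - a ^ 2) / (1 - b ^ 2) ≤ 1 := by
        rw [div_le_one hden]; nlinarith
      have hs1 : Real.sqrt ((1 - a ^ 2) / (1 - b ^ 2)) ≤ 1 :=
        le_trans (Real.sqrt_le_sqrt hratio) (by rw [Real.sqrt_one])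
      have : ‖d k‖ = b * Real.sqrt ((1 - a ^ 2) / (1 - b ^ 2)) := by
        simp only [hd, dif_pos h, norm_mul, RingHomIsometric.norm_map, Complex.norm_real,
          Real.norm_eq_abs, abs_of_nonneg (Real.sqrt_nonneg _)]
        rfl
      rw [this]
      calc b * Real.sqrt ((1 - a ^ 2) / (1 - b ^ 2)) ≤ b * 1 :=
            mul_le_mul_of_nonneg_left hs1 hb0
        _ < 1 := by simpa using hb1
    · simp [hd, h]
  have hM' : ∀ i j : Fin n, M i j =
      if i = j then 1 else if (i : ℕ) = (j : ℕ) + 1 then d (j : ℕ) else 0 := by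
    intro i j
    subst hM
    simp only [Matrix.of_apply]
    by_cases h1 : i = j
    · simp [h1]
    · by_cases h2 : (i : ℕ) = (j : ℕ) + 1
      · have hj : (j : ℕ) + 1 < n := h2 ▸ i.isLt
        have hij : i = ⟨(j:ℕ)+1, hj⟩ := Fin.ext h2
        have hjj : j = ⟨(j:ℕ), j.isLt⟩ := Fin.ext rfl
        simp only [h1, h2, if_false, if_true, if_neg h1, if_pos h2, hd, dif_pos hj]
        rw [hij]
      · simp [h1, h2]
  set B : Matrix (Fin n) (Fin n) ℂ := Matrix.of fun i j =>
    if (j : ℕ) ≤ (i : ℕ) then ∏ k ∈ Finset.Ico (j : ℕ) (i : ℕ), (-(d k)) else 0 with hB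
  have hBnorm1 : ∀ i j, ‖B i j‖ ≤ 1 := by
    intro i j
    simp only [hB, Matrix.of_apply]
    split_ifs with h
    · rw [norm_prod]
      refine Finset.prod_le_one (fun k _ => norm_nonneg _) (fun k _ => ?_)
      rw [norm_neg]; exact (hdnorm k).le
    · simp
  have hMB : M * B = 1 := by
    ext i j
    rw [Matrix.mul_apply]
    have hterm : ∀ l, M i l * B l j =
        (if l = i then B i j else 0) +
          (if (i : ℕ) = (l : ℕ) + 1 then d (l : ℕ) * B l j else 0) := by
      intro l
      rw [hM']
      by_cases h1 : i = l
      · subst h1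
        have : ¬ ((i : ℕ) = (i : ℕ) + 1) := by omega
        simp [this]
      · have h1' : ¬ (l = i) := fun h => h1 h.symm
        simp only [if_neg h1, if_neg h1']
        split_ifs <;> ring
    rw [Finset.sum_congr rfl (fun l _ => hterm l), Finset.sum_add_distrib]
    have hfst : (∑ l : Fin n, if l = i then B i j else 0) = B i j := by
      simp
    rw [hfst]
    rcases Nat.eq_zero_or_eq_succ_pred (i : ℕ) with h0 | hsucc
    · have hz : (∑ l : Fin n, if (i : ℕ) = (l : ℕ) + 1 then d (l : ℕ) * B l j else 0) = 0 := by
        refine Finset.sum_eq_zero fun l _ => ?_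
        rw [if_neg]; omega
      rw [hz, add_zero, Matrix.one_apply]
      simp only [hB, Matrix.of_apply]
      by_cases hij : i = j
      · have : (j : ℕ) ≤ (i : ℕ) := le_of_eq (congrArg Fin.val hij.symm)
        rw [if_pos hij, if_pos this]
        have : Finset.Ico (j : ℕ) (i : ℕ) = ∅ := by
          rw [Finset.Ico_eq_empty_iff]; omega
        rw [this, Finset.prod_empty]
      · rw [if_neg hij, if_neg]
        intro hle
        exact hij (Fin.ext (by omega))
    · set m := (i : ℕ) - 1 with hm
      have him : (i : ℕ) = m + 1 := by omega
      have hmn : m < n := by omega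
      have hsnd : (∑ l : Fin n, if (i : ℕ) = (l : ℕ) + 1 then d (l : ℕ) * B l j else 0)
          = d m * B ⟨m, hmn⟩ j := by
        rw [Finset.sum_eq_single (⟨m, hmn⟩ : Fin n)]
        · rw [if_pos (by simp [him])]
        · intro l _ hl
          rw [if_neg]
          intro hc
          exact hl (Fin.ext (show (l : ℕ) = m by omega))
        · intro h; exact absurd (Finset.mem_univ _) h
      rw [hsnd, Matrix.one_apply]
      simp only [hB, Matrix.of_apply]
      by_cases hle : (j : ℕ) ≤ m
      · have h1 : (j : ℕ) ≤ (i : ℕ) := by omega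
        have hij : ¬ (i = j) := by
          intro h
          exact absurd (congrArg Fin.val h) (by omega)
        rw [if_pos h1, if_pos hle, if_neg hij]
        have hprod : ∏ k ∈ Finset.Ico (j : ℕ) (i : ℕ), (-(d k)) =
            (∏ k ∈ Finset.Ico (j : ℕ) m, (-(d k))) * (-(d m)) := by
          rw [him, Finset.prod_Ico_succ_top hle]
        rw [hprod]
        ring
      · have hij2 : ¬ ((j : ℕ) ≤ m) := hle
        by_cases hj : (j : ℕ) = m + 1
        · have hij : i = j := Fin.ext (by omega)
          rw [if_pos hij, if_pos (show (j:ℕ) ≤ (i:ℕ) by omega), if_neg hij2]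
          have : Finset.Ico (j : ℕ) (i : ℕ) = ∅ := by
            rw [Finset.Ico_eq_empty_iff]; omega
          rw [this, Finset.prod_empty]
          ring
        · have hij : ¬ (i = j) := by
            intro h
            exact absurd (congrArg Fin.val h) (by omega)
          rw [if_neg hij, if_neg (show ¬ ((j:ℕ) ≤ (i:ℕ)) by omega), if_neg hij2]
          ring
  have hMinv : M⁻¹ = B := Matrix.inv_eq_right_inv hMB
  constructor
  · intro i j hij
    rw [hMinv]
    simp only [hB, Matrix.of_apply]
    have hji : (j : ℕ) < (i : ℕ) := hij
    rw [if_pos hji.le, norm_prod]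
    have hjmem : (j : ℕ) ∈ Finset.Ico (j : ℕ) (i : ℕ) := Finset.mem_Ico.2 ⟨le_rfl, hji⟩
    rw [← Finset.mul_prod_erase _ _ hjmem]
    have hrest : (∏ k ∈ (Finset.Ico (j:ℕ) (i:ℕ)).erase (j:ℕ), ‖-(d k)‖) ≤ 1 :=
      Finset.prod_le_one (fun k _ => norm_nonneg _)
        (fun k _ => by rw [norm_neg]; exact (hdnorm k).le)
    calc ‖-(d (j:ℕ))‖ * ∏ k ∈ (Finset.Ico (j:ℕ) (i:ℕ)).erase (j:ℕ), ‖-(d k)‖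
        ≤ ‖-(d (j:ℕ))‖ * 1 := mul_le_mul_of_nonneg_left hrest (norm_nonneg _)
      _ = ‖d (j:ℕ)‖ := by rw [mul_one, norm_neg]
      _ < 1 := hdnorm _
  · have hMrow : ∀ i, ∑ j, ‖M i j‖ ≤ 2 := by
      intro i
      calc ∑ j, ‖M i j‖
          ≤ ∑ j : Fin n, ((if i = j then (1:ℝ) else 0) +
              (if (i : ℕ) = (j : ℕ) + 1 then (1:ℝ) else 0)) := by
            refine Finset.sum_le_sum fun j _ => ?_
            rw [hM']
            split_ifs <;> simpa using (hdnorm (j : ℕ)).le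
        _ = (∑ j : Fin n, if i = j then (1:ℝ) else 0) +
            (∑ j : Fin n, if (i : ℕ) = (j : ℕ) + 1 then (1:ℝ) else 0) :=
            Finset.sum_add_distrib
        _ ≤ 1 + 1 := by
            gcongr
            · exact sum_indicator_le_one _ (fun a b ha hb => by
                rw [← ha, hb])
            · exact sum_indicator_le_one _ (fun a b ha hb => Fin.ext (by omega))
        _ = 2 := by norm_num
    have hMcol : ∀ j, ∑ i, ‖M i j‖ ≤ 2 := by
      intro j
      calc ∑ i, ‖M i j‖
          ≤ ∑ i : Fin n, ((if i = j then (1:ℝ) else 0) +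
              (if (i : ℕ) = (j : ℕ) + 1 then (1:ℝ) else 0)) := by
            refine Finset.sum_le_sum fun i _ => ?_
            rw [hM']
            split_ifs <;> simpa using (hdnorm (j : ℕ)).le
        _ = (∑ i : Fin n, if i = j then (1:ℝ) else 0) +
            (∑ i : Fin n, if (i : ℕ) = (j : ℕ) + 1 then (1:ℝ) else 0) :=
            Finset.sum_add_distrib
        _ ≤ 1 + 1 := by
            gcongr
            · exact sum_indicator_le_one _ (fun a b ha hb => by rw [ha, ← hb])
            · exact sum_indicator_le_one _ (fun a b ha hb => Fin.ext (by omega))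
        _ = 2 := by norm_num
    have hBrow : ∀ i, ∑ j, ‖B i j‖ ≤ (n : ℝ) := by
      intro i
      calc ∑ j, ‖B i j‖ ≤ ∑ _j : Fin n, (1:ℝ) :=
            Finset.sum_le_sum fun j _ => hBnorm1 i j
        _ = n := by simp
    have hBcol : ∀ j, ∑ i, ‖B i j‖ ≤ (n : ℝ) := by
      intro j
      calc ∑ i, ‖B i j‖ ≤ ∑ _i : Fin n, (1:ℝ) :=
            Finset.sum_le_sum fun i _ => hBnorm1 i j
        _ = n := by simp
    have hM2 : ‖M‖ ≤ 2 := by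
      have h := schur_bound M 2 2 (by norm_num) (by norm_num) hMrow hMcol
      rwa [show Real.sqrt (2 * 2) = 2 from Real.sqrt_mul_self (by norm_num)] at h
    have hBn : ‖M⁻¹‖ ≤ (n : ℝ) := by
      rw [hMinv]
      have h := schur_bound B n n (Nat.cast_nonneg n) (Nat.cast_nonneg n) hBrow hBcol
      rwa [show Real.sqrt ((n:ℝ) * n) = (n : ℝ) from Real.sqrt_mul_self (Nat.cast_nonneg n)] at h
    exact mul_le_mul hM2 hBn (norm_nonneg _) (by norm_num)
end

section
/- Let λ_1,...,λ_n be distinct complex numbers with |λ_k| < 1, and let A = M⁻¹N be the bidiagonal-fraction triangular input normal state matrix built from them. Then the matrix V with V_{kk} = 1, V_{jk} = 0 for j < k, and for j > k: V_{jk} = [sqrt(1−|λ_j|²) sqrt(1−|λ_k|²) / (λ_k − λ_j)] · ∏_{k < j' < j} (1 − λ_k λ_{j'}*)/(λ_k − λ_{j'}), satisfies AV = VΛ where Λ = diag(λ_1,...,λ_n). -/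
open Matrix

set_option maxHeartbeats 1000000 in
/-- The explicit lower triangular matrix `V` of eigenvectors satisfies `AV = VΛ`
for the bidiagonal-fraction TIN state matrix `A = M⁻¹N` built from distinct `|λ_k| < 1`. -/
theorem stmt9 {n : ℕ} (lam : Fin n → ℂ) (hlam : ∀ k, ‖lam k‖ < 1)
    (hdistinct : Function.Injective lam)
    (ρ : Fin n → ℝ) (hρ : ∀ k, ρ k = Real.sqrt (1 - ‖lam k‖ ^ 2))
    (M N V : Matrix (Fin n) (Fin n) ℂ)
    (hM : M = Matrix.of fun i j : Fin n =>
      if i = j then 1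
      else if (i : ℕ) = (j : ℕ) + 1 then
        (starRingEnd ℂ) (lam j) * ((ρ i : ℂ) / (ρ j : ℂ))
      else 0)
    (hN : N = Matrix.of fun i j : Fin n =>
      if i = j then lam i
      else if (i : ℕ) = (j : ℕ) + 1 then ((ρ i : ℂ) / (ρ j : ℂ))
      else 0)
    (hV : V = Matrix.of fun j k : Fin n =>
      if j = k then 1
      else if j < k then 0
      else ((Real.sqrt (1 - ‖lam j‖ ^ 2) * Real.sqrt (1 - ‖lam k‖ ^ 2) : ℝ) : ℂ) /
          (lam k - lam j) *
        ∏ j' ∈ Finset.Ioo k j,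
          (1 - lam k * (starRingEnd ℂ) (lam j')) / (lam k - lam j')) :
    (M⁻¹ * N) * V = V * Matrix.diagonal lam := by
  have hρpos : ∀ k, 0 < ρ k := by
    intro k
    rw [hρ k]
    have h1 := hlam k
    have h2 := norm_nonneg (lam k)
    exact Real.sqrt_pos.2 (by nlinarith)
  have hρC : ∀ k, (ρ k : ℂ) ≠ 0 := fun k => by
    exact_mod_cast (hρpos k).ne'
  have hρsq : ∀ k, (ρ k : ℂ) * (ρ k : ℂ) = 1 - lam k * (starRingEnd ℂ) (lam k) := by
    intro k
    have h1 : ρ k * ρ k = 1 - ‖lam k‖ ^ 2 := by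
      rw [hρ k]
      exact Real.mul_self_sqrt (by nlinarith [hlam k, norm_nonneg (lam k)])
    have h2 : lam k * (starRingEnd ℂ) (lam k) = ((‖lam k‖ ^ 2 : ℝ) : ℂ) := by
      rw [Complex.mul_conj]
      norm_cast
      rw [← Complex.sq_norm]
    have h3 : ((ρ k : ℝ) : ℂ) * ((ρ k : ℝ) : ℂ) = ((ρ k * ρ k : ℝ) : ℂ) := by push_cast; ring
    rw [h2, h3, h1]
    push_cast
    ring
  have hne : ∀ i k : Fin n, i ≠ k → lam k - lam i ≠ 0 := by
    intro i k h
    exact sub_ne_zero.2 fun h' => h (hdistinct h'.symm)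
  -- invertibility of M
  have hdet : M.det = 1 := by
    rw [hM, Matrix.det_of_lowerTriangular]
    · simp
    · intro i j hij
      have hij' : i < j := hij
      simp only [Matrix.of_apply]
      rw [if_neg (by omega : ¬ i = j), if_neg (by omega : ¬ (i : ℕ) = (j : ℕ) + 1)]
  have hMunit : IsUnit M.det := by rw [hdet]; exact isUnit_one
  -- the key matrix identity
  have key : N * V = M * (V * Matrix.diagonal lam) := by
    ext i k
    rw [Matrix.mul_apply, Matrix.mul_apply]
    simp only [hM, hN, Matrix.of_apply, Matrix.mul_diagonal, ite_mul, zero_mul]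
    rcases Nat.eq_zero_or_pos (i : ℕ) with hi | hi
    · -- i = 0 : no subdiagonal terms
      have hsum : ∀ f g : Fin n → ℂ,
          (∑ j, if i = j then f j else if (i : ℕ) = (j : ℕ) + 1 then g j else 0) = f i := by
        intro f g
        rw [Finset.sum_eq_single i]
        · simp
        · intro j _ hj
          rw [if_neg (Ne.symm hj), if_neg (by omega)]
        · simp
      rw [hsum, hsum]
      simp only [hV, Matrix.of_apply]
      rcases eq_or_ne i k with h | h
      · subst h; simp [mul_comm]
      · have hk : (i : ℕ) ≠ (k : ℕ) := fun h' => h (Fin.ext h')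
        have : i < k := by rw [Fin.lt_def]; omega
        rw [if_neg h, if_pos this]
        ring
    · -- i > 0
      set p : Fin n := ⟨(i : ℕ) - 1, by omega⟩ with hp
      have hpv : (p : ℕ) = (i : ℕ) - 1 := rfl
      have hpi : p ≠ i := by rw [Fin.ne_iff_vne]; omega
      have hsum : ∀ f g : Fin n → ℂ,
          (∑ j, if i = j then f j else if (i : ℕ) = (j : ℕ) + 1 then g j else 0)
            = f i + g p := by
        intro f g
        have : ∀ j : Fin n, (if i = j then f j else if (i : ℕ) = (j : ℕ) + 1 then g j else 0)
            = (if j = i then f i else 0) + (if j = p then g p else 0) := by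
          intro j
          rcases eq_or_ne i j with h1 | h1
          · subst h1
            rw [if_pos rfl, if_pos rfl, if_neg hpi.symm, add_zero]
          · rw [if_neg h1, if_neg (Ne.symm h1)]
            rcases eq_or_ne j p with h2 | h2
            · subst h2
              rw [if_pos (by omega), if_pos rfl, zero_add]
            · have h2' : (j : ℕ) ≠ (p : ℕ) := fun h' => h2 (Fin.ext h')
              rw [if_neg (by omega : ¬ (i : ℕ) = (j : ℕ) + 1), if_neg h2, add_zero]
        rw [Finset.sum_congr rfl fun j _ => this j, Finset.sum_add_distrib]
        simp
      rw [hsum, hsum]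
      simp only [hV, Matrix.of_apply, ← hρ]
      -- now a scalar identity
      rcases lt_trichotomy i k with h | h | h
      · -- i < k : everything vanishes
        have hpk : p < k := by rw [Fin.lt_def] at h ⊢; omega
        rw [if_neg h.ne, if_pos h, if_neg hpk.ne, if_pos hpk]
        ring
      · -- i = k
        subst h
        have hpk : p < i := by rw [Fin.lt_def]; omega
        rw [if_pos rfl, if_neg hpk.ne, if_pos hpk]
        ring
      · -- k < i
        have hik : ¬ i < k := not_lt.2 h.le
        rw [if_neg h.ne', if_neg hik]
        rcases eq_or_ne p k with h2 | h2
        · -- i = k + 1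
          subst h2
          have hIoo : Finset.Ioo p i = ∅ := by
            ext x
            simp only [Finset.mem_Ioo, Finset.notMem_empty, iff_false, not_and, Fin.lt_def]
            omega
          rw [if_pos rfl, hIoo, Finset.prod_empty, mul_one]
          push_cast
          have e1 := hρsq p
          have e2 := hne i p h.ne'
          have e0 := hρC p
          field_simp
          linear_combination ((ρ i : ℝ) : ℂ) * (lam i - lam p) * e1
        · -- k < p < i
          have hkp : k < p := by rw [Fin.lt_def] at h ⊢; rw [Fin.ne_iff_vne] at h2; omega
          have hpk' : ¬ p < k := not_lt.2 hkp.le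
          rw [if_neg h2, if_neg hpk']
          have hIoo : Finset.Ioo k i = insert p (Finset.Ioo k p) := by
            ext x
            simp only [Finset.mem_Ioo, Finset.mem_insert, Fin.lt_def, Fin.ext_iff]
            constructor
            · intro hx; omega
            · intro hx; omega
          have hpnot : p ∉ Finset.Ioo k p := by simp
          rw [hIoo, Finset.prod_insert hpnot]
          set P := ∏ j' ∈ Finset.Ioo k p, (1 - lam k * (starRingEnd ℂ) (lam j')) / (lam k - lam j') with hP
          push_cast
          have e2 := hne i k h.ne'
          have e3 := hne p k hkp.ne'
          have e0 := hρC p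
          field_simp
          ring
  -- conclude
  calc (M⁻¹ * N) * V = M⁻¹ * (M * (V * Matrix.diagonal lam)) := by rw [mul_assoc, key]
    _ = (M⁻¹ * M) * (V * Matrix.diagonal lam) := by rw [mul_assoc]
    _ = V * Matrix.diagonal lam := by rw [Matrix.nonsing_inv_mul M hMunit, one_mul]
end

section
/- Let A be an n×n lower triangular complex matrix, B an n×d matrix, and D a positive definite diagonal matrix with D − ADA* = BB*. If the concatenated n×(n+d) matrix (B | A) has nonvanishing leading principal k×k minors for all k < n, then there exist unique matrices M, N, B̂ such that M is lower triangular with lower bandwidth d and unit diagonal, N is lower triangular with lower bandwidth d, B̂ is n×d with B̂_{jk} = 0 for j > k, and B = M⁻¹B̂, A = M⁻¹N. -/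
open Matrix

namespace Stmt11Aux

lemma sum_split {n : ℕ} (i : Fin n) (f : Fin n → ℂ) (hf : ∀ j, i < j → f j = 0) :
    ∑ j, f j = (∑ j : Fin i.1, f (Fin.castLE i.2.le j)) + f i := by
  set g : ℕ → ℂ := fun j => if h : j < n then f ⟨j, h⟩ else 0 with hg
  have h1 : ∑ j, f j = ∑ j ∈ Finset.range n, g j := by
    rw [← Fin.sum_univ_eq_sum_range g n]
    refine Finset.sum_congr rfl fun j _ => ?_
    simp [hg, j.2]
  have h2 : ∑ j ∈ Finset.range n, g j = ∑ j ∈ Finset.range (i.1 + 1), g j := by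
    refine (Finset.sum_subset (Finset.range_subset_range.2 i.2) fun j hj hj' => ?_).symm
    rw [Finset.mem_range] at hj hj'
    simp only [hg, dif_pos hj]
    exact hf ⟨j, hj⟩ (by simpa [Fin.lt_def] using by omega)
  have h3 : ∑ j : Fin i.1, f (Fin.castLE i.2.le j) = ∑ j ∈ Finset.range i.1, g j := by
    rw [← Fin.sum_univ_eq_sum_range g i.1]
    refine Finset.sum_congr rfl fun j _ => ?_
    have hjn : (j : ℕ) < n := lt_trans j.2 i.2
    simp only [hg, dif_pos hjn]
    rfl
  rw [h1, h2, Finset.sum_range_succ, h3]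
  congr 1
  simp [hg, i.2]

lemma lower_mul {n : ℕ} (P Q : Matrix (Fin n) (Fin n) ℂ)
    (hP : ∀ i j : Fin n, i < j → P i j = 0) (hQ : ∀ i j : Fin n, i < j → Q i j = 0) :
    ∀ i j : Fin n, i < j → (P * Q) i j = 0 := by
  intro i j hij
  rw [Matrix.mul_apply]
  refine Finset.sum_eq_zero fun k _ => ?_
  rcases lt_or_ge i k with h | h
  · rw [hP i k h, zero_mul]
  · rw [hQ k j (lt_of_le_of_lt h hij), mul_zero]

lemma det_unitLower {n : ℕ} (P : Matrix (Fin n) (Fin n) ℂ)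
    (hP : ∀ i j : Fin n, i < j → P i j = 0) (hd : ∀ i, P i i = 1) : P.det = 1 := by
  rw [Matrix.det_of_lowerTriangular P (fun i j hij => hP i j hij)]
  simp [hd]

lemma inv_upper {n : ℕ} (P : Matrix (Fin n) (Fin n) ℂ)
    (hP : ∀ i j : Fin n, j < i → P i j = 0) (hdet : IsUnit P.det) :
    ∀ i j : Fin n, j < i → P⁻¹ i j = 0 := by
  haveI := P.invertibleOfIsUnitDet hdet
  have h : P.BlockTriangular id := fun i j hij => hP i j hij
  exact fun i j hij => blockTriangular_inv_of_blockTriangular h hij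

end Stmt11Aux

namespace Stmt11Aux

variable {n d : ℕ}

def subC (C : Matrix (Fin n) (Fin (d + n)) ℂ) (i : Fin n) : Matrix (Fin i.1) (Fin i.1) ℂ :=
  C.submatrix (Fin.castLE i.2.le) (Fin.castLE (le_trans i.2.le (Nat.le_add_left n d)))

noncomputable def vrow (C : Matrix (Fin n) (Fin (d + n)) ℂ) (i : Fin n) : Fin i.1 → ℂ :=
  ((subC C i)ᵀ)⁻¹ *ᵥ fun c => -C i (Fin.castLE (le_trans i.2.le (Nat.le_add_left n d)) c)

noncomputable def Mmat (C : Matrix (Fin n) (Fin (d + n)) ℂ) : Matrix (Fin n) (Fin n) ℂ := fun i j =>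
  if h : (j : ℕ) < i.1 then vrow C i ⟨j.1, h⟩ else if j = i then 1 else 0

lemma Mmat_lower (C : Matrix (Fin n) (Fin (d + n)) ℂ) :
    ∀ i j : Fin n, i < j → Mmat C i j = 0 := by
  intro i j h
  rw [Fin.lt_def] at h
  rw [Mmat, dif_neg (by omega), if_neg (by intro he; subst he; omega)]

lemma Mmat_diag (C : Matrix (Fin n) (Fin (d + n)) ℂ) : ∀ i, Mmat C i i = 1 := by
  intro i
  rw [Mmat, dif_neg (by omega), if_pos rfl]

lemma expand (C : Matrix (Fin n) (Fin (d + n)) ℂ) (W : Matrix (Fin n) (Fin n) ℂ)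
    (hW : ∀ i j : Fin n, i < j → W i j = 0) (hd1 : ∀ i, W i i = 1)
    (i : Fin n) (c : Fin (d + n)) (hc : (c : ℕ) < i.1) :
    (W * C) i c = ((subC C i)ᵀ *ᵥ fun j => W i (Fin.castLE i.2.le j)) ⟨c.1, hc⟩ + C i c := by
  rw [Matrix.mul_apply,
    sum_split i (fun j => W i j * C j c) (fun j hj => by show W i j * C j c = 0; rw [hW i j hj, zero_mul]),
    hd1 i, one_mul]
  congr 1
  simp only [Matrix.mulVec, dotProduct, transpose_apply, subC, submatrix_apply]
  refine Finset.sum_congr rfl fun j _ => ?_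
  rw [mul_comm]
  rfl

lemma subC_det (C : Matrix (Fin n) (Fin (d + n)) ℂ)
    (hminor : ∀ k (hk : k < n),
      (C.submatrix (Fin.castLE hk.le) (Fin.castLE (le_trans hk.le (Nat.le_add_left n d)))).det ≠ 0)
    (i : Fin n) : IsUnit ((subC C i)ᵀ).det := by
  rw [Matrix.det_transpose]
  exact isUnit_iff_ne_zero.2 (hminor i.1 i.2)

lemma Mmat_echelon (C : Matrix (Fin n) (Fin (d + n)) ℂ)
    (hminor : ∀ k (hk : k < n),
      (C.submatrix (Fin.castLE hk.le) (Fin.castLE (le_trans hk.le (Nat.le_add_left n d)))).det ≠ 0)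
    (i : Fin n) (c : Fin (d + n)) (hc : (c : ℕ) < i.1) : (Mmat C * C) i c = 0 := by
  rw [expand C (Mmat C) (Mmat_lower C) (Mmat_diag C) i c hc]
  have hfun : (fun j => Mmat C i (Fin.castLE i.2.le j)) = vrow C i := by
    funext j
    rw [Mmat, dif_pos (show ((Fin.castLE i.2.le j : Fin n) : ℕ) < i.1 from j.2)]
    rfl
  rw [hfun]
  have hmul : (subC C i)ᵀ *ᵥ vrow C i =
      fun c' => -C i (Fin.castLE (le_trans i.2.le (Nat.le_add_left n d)) c') := by
    rw [vrow, Matrix.mulVec_mulVec, Matrix.mul_nonsing_inv _ (subC_det C hminor i),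
      Matrix.one_mulVec]
  rw [hmul]
  show -C i (Fin.castLE _ ⟨c.1, hc⟩) + C i c = 0
  have : Fin.castLE (le_trans i.2.le (Nat.le_add_left n d)) ⟨c.1, hc⟩ = c := rfl
  rw [this, neg_add_cancel]

lemma row_uniq (C : Matrix (Fin n) (Fin (d + n)) ℂ)
    (hminor : ∀ k (hk : k < n),
      (C.submatrix (Fin.castLE hk.le) (Fin.castLE (le_trans hk.le (Nat.le_add_left n d)))).det ≠ 0)
    (W : Matrix (Fin n) (Fin n) ℂ)
    (hW : ∀ i j : Fin n, i < j → W i j = 0) (hd1 : ∀ i, W i i = 1)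
    (hech : ∀ (i : Fin n) (c : Fin (d + n)), (c : ℕ) < i.1 → (W * C) i c = 0) :
    W = Mmat C := by
  have hrows : ∀ i : Fin n, (fun j => W i (Fin.castLE i.2.le j)) = vrow C i := by
    intro i
    have hdet := subC_det C hminor i
    have hsys : (subC C i)ᵀ *ᵥ (fun j => W i (Fin.castLE i.2.le j)) =
        fun c' => -C i (Fin.castLE (le_trans i.2.le (Nat.le_add_left n d)) c') := by
      funext c'
      have h0 := hech i (Fin.castLE (le_trans i.2.le (Nat.le_add_left n d)) c') c'.2
      rw [expand C W hW hd1 i _ c'.2] at h0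
      have hidx : (⟨((Fin.castLE (le_trans i.2.le (Nat.le_add_left n d)) c' : Fin (d+n)) : ℕ),
          c'.2⟩ : Fin i.1) = c' := rfl
      rw [hidx] at h0
      exact eq_neg_of_add_eq_zero_left h0
    calc (fun j => W i (Fin.castLE i.2.le j))
        = (1 : Matrix (Fin i.1) (Fin i.1) ℂ) *ᵥ (fun j => W i (Fin.castLE i.2.le j)) := by
          rw [Matrix.one_mulVec]
      _ = vrow C i := by
          rw [← Matrix.nonsing_inv_mul _ hdet, ← Matrix.mulVec_mulVec, hsys, vrow]
  funext i j
  rcases lt_trichotomy (j : ℕ) (i : ℕ) with h | h | h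
  · have : W i j = (fun j' => W i (Fin.castLE i.2.le j')) ⟨j.1, h⟩ := rfl
    rw [this, hrows i]
    rw [Mmat, dif_pos h]
  · have : j = i := Fin.ext h
    subst this
    rw [hd1, Mmat_diag]
  · rw [hW i j (by rwa [Fin.lt_def]), Mmat_lower C i j (by rwa [Fin.lt_def])]

end Stmt11Aux

open Matrix

/-- Band fraction representation: if `D − ADA* = BB*` with `D` positive diagonal, `A` lower
triangular, and `(B | A)` has nonvanishing leading principal minors of order `k < n`, then
there is a unique band fraction `(B, A) = M⁻¹(B̂, N)` with `M, N` lower triangular of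
bandwidth `d`, `M` unit diagonal, and `B̂` "upper triangular". -/
theorem stmt11 {n d : ℕ} (A : Matrix (Fin n) (Fin n) ℂ) (B : Matrix (Fin n) (Fin d) ℂ)
    (δ : Fin n → ℝ) (hδ : ∀ i, 0 < δ i)
    (hLT : ∀ i j : Fin n, i < j → A i j = 0)
    (hStein : Matrix.diagonal (fun i => (δ i : ℂ)) -
      A * Matrix.diagonal (fun i => (δ i : ℂ)) * Aᴴ = B * Bᴴ)
    (C : Matrix (Fin n) (Fin (d + n)) ℂ)
    (hC : C = Matrix.of fun (i : Fin n) (j : Fin (d + n)) =>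
      if h : (j : ℕ) < d then B i ⟨j, h⟩
      else A i ⟨(j : ℕ) - d, by have := j.2; omega⟩)
    (hminor : ∀ k (hk : k < n),
      (C.submatrix (Fin.castLE hk.le) (Fin.castLE (by omega : k ≤ d + n))).det ≠ 0) :
    ∃! MNB : Matrix (Fin n) (Fin n) ℂ × Matrix (Fin n) (Fin n) ℂ × Matrix (Fin n) (Fin d) ℂ,
      (∀ i j : Fin n, ((i : ℕ) < (j : ℕ) ∨ (j : ℕ) + d < (i : ℕ)) → MNB.1 i j = 0) ∧
      (∀ i : Fin n, MNB.1 i i = 1) ∧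
      (∀ i j : Fin n, ((i : ℕ) < (j : ℕ) ∨ (j : ℕ) + d < (i : ℕ)) → MNB.2.1 i j = 0) ∧
      (∀ (j : Fin n) (k : Fin d), (k : ℕ) < (j : ℕ) → MNB.2.2 j k = 0) ∧
      B = MNB.1⁻¹ * MNB.2.2 ∧ A = MNB.1⁻¹ * MNB.2.1 := by

  classical
  set Dm : Matrix (Fin n) (Fin n) ℂ := Matrix.diagonal (fun i => (δ i : ℂ)) with hDm
  set M := Stmt11Aux.Mmat C with hM
  have hMlow : ∀ i j : Fin n, i < j → M i j = 0 := Stmt11Aux.Mmat_lower C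
  have hMdiag : ∀ i : Fin n, M i i = 1 := Stmt11Aux.Mmat_diag C
  have hech : ∀ (i : Fin n) (c : Fin (d + n)), (c : ℕ) < (i : ℕ) → (M * C) i c = 0 :=
    Stmt11Aux.Mmat_echelon C hminor
  have hMunit : IsUnit M.det := by
    rw [hM, Stmt11Aux.det_unitLower _ (Stmt11Aux.Mmat_lower C) (Stmt11Aux.Mmat_diag C)]
    exact isUnit_one
  -- column identification lemmas
  have hcolB : ∀ (W : Matrix (Fin n) (Fin n) ℂ) (i : Fin n) (c : Fin (d + n)) (k : Fin d),
      (k : ℕ) = (c : ℕ) → (W * C) i c = (W * B) i k := by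
    intro W i c k hkc
    rw [Matrix.mul_apply, Matrix.mul_apply]
    refine Finset.sum_congr rfl fun l _ => ?_
    show W i l * C l c = W i l * B l k
    congr 1
    rw [hC]
    simp only [Matrix.of_apply]
    rw [dif_pos (show (c : ℕ) < d from by rw [← hkc]; exact k.2)]
    congr 1
    exact Fin.ext hkc.symm
  have hcolA : ∀ (W : Matrix (Fin n) (Fin n) ℂ) (i : Fin n) (c : Fin (d + n)) (j : Fin n),
      (j : ℕ) + d = (c : ℕ) → (W * C) i c = (W * A) i j := by
    intro W i c j hjc
    rw [Matrix.mul_apply, Matrix.mul_apply]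
    refine Finset.sum_congr rfl fun l _ => ?_
    show W i l * C l c = W i l * A l j
    congr 1
    rw [hC]
    simp only [Matrix.of_apply]
    rw [dif_neg (show ¬ (c : ℕ) < d from by omega)]
    congr 1
    exact Fin.ext (by simp; omega)
  set N := M * A with hN
  set Bh := M * B with hBh
  have hNlow : ∀ i j : Fin n, i < j → N i j = 0 := Stmt11Aux.lower_mul M A hMlow hLT
  have hNband : ∀ i j : Fin n, (j : ℕ) + d < (i : ℕ) → N i j = 0 := by
    intro i j h
    have h2 : d + (j : ℕ) < d + n := by have := j.2; omega
    have := hech i ⟨d + (j : ℕ), h2⟩ (by simp; omega)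
    rwa [hcolA M i ⟨d + (j : ℕ), h2⟩ j (by simp [Nat.add_comm])] at this
  have hBhzero : ∀ (j : Fin n) (k : Fin d), (k : ℕ) < (j : ℕ) → Bh j k = 0 := by
    intro j k h
    have h2 : (k : ℕ) < d + n := by have := k.2; omega
    have := hech j ⟨(k : ℕ), h2⟩ (by simpa using h)
    rwa [hcolB M j ⟨(k : ℕ), h2⟩ k (by simp)] at this
  -- band structure of M from the Stein equation
  have hDmdet : IsUnit Dm.det := by
    rw [hDm, Matrix.det_diagonal]
    refine isUnit_iff_ne_zero.2 (Finset.prod_ne_zero_iff.2 fun i _ => ?_)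
    exact Complex.ofReal_ne_zero.2 (hδ i).ne'
  have hident : M * Dm * Mᴴ = Bh * Bhᴴ + N * Dm * Nᴴ := by
    have h1 : Dm = B * Bᴴ + A * Dm * Aᴴ := sub_eq_iff_eq_add.mp hStein
    calc M * Dm * Mᴴ = M * (B * Bᴴ + A * Dm * Aᴴ) * Mᴴ := by rw [← h1]
      _ = Bh * Bhᴴ + N * Dm * Nᴴ := by
          rw [hBh, hN]
          simp only [Matrix.conjTranspose_mul, Matrix.mul_add, Matrix.add_mul, Matrix.mul_assoc]
  have hHband : ∀ i j : Fin n, (j : ℕ) + d < (i : ℕ) → (M * Dm * Mᴴ) i j = 0 := by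
    intro i j h
    rw [hident, Matrix.add_apply]
    have e1 : (Bh * Bhᴴ) i j = 0 := by
      rw [Matrix.mul_apply]
      refine Finset.sum_eq_zero fun k _ => ?_
      rw [hBhzero i k (by have := k.2; omega), zero_mul]
    have e2 : (N * Dm * Nᴴ) i j = 0 := by
      rw [Matrix.mul_apply]
      refine Finset.sum_eq_zero fun k _ => ?_
      rcases le_or_gt (k : ℕ) (j : ℕ) with hk | hk
      · have hz : (N * Dm) i k = 0 := by
          rw [hDm, Matrix.mul_diagonal, hNband i k (by omega), zero_mul]
        rw [hz, zero_mul]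
      · rw [Matrix.conjTranspose_apply, hNlow j k (by rwa [Fin.lt_def]), star_zero, mul_zero]
    rw [e1, e2, add_zero]
  have hMHdet : IsUnit Mᴴ.det := by
    rw [Matrix.det_conjTranspose]
    exact hMunit.map (starRingEnd ℂ)
  have hTup : ∀ i j : Fin n, j < i → (Mᴴ)⁻¹ i j = 0 :=
    Stmt11Aux.inv_upper Mᴴ
      (fun i j hij => by rw [Matrix.conjTranspose_apply, hMlow j i hij, star_zero]) hMHdet
  have hDminv : Dm⁻¹ = Matrix.diagonal (Ring.inverse fun i => (δ i : ℂ)) := by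
    rw [hDm, Matrix.inv_diagonal]
  have hMdecomp : M = (M * Dm * Mᴴ) * (Mᴴ)⁻¹ * Dm⁻¹ := by
    rw [Matrix.mul_assoc (M * Dm), Matrix.mul_nonsing_inv _ hMHdet, Matrix.mul_one,
      Matrix.mul_assoc, Matrix.mul_nonsing_inv _ hDmdet, Matrix.mul_one]
  have hMband : ∀ i j : Fin n, (j : ℕ) + d < (i : ℕ) → M i j = 0 := by
    intro i j h
    have hX : ((M * Dm * Mᴴ) * (Mᴴ)⁻¹) i j = 0 := by
      rw [Matrix.mul_apply]
      refine Finset.sum_eq_zero fun k _ => ?_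
      rcases le_or_gt (k : ℕ) (j : ℕ) with hk | hk
      · rw [hHband i k (by omega), zero_mul]
      · rw [hTup k j (by rwa [Fin.lt_def]), mul_zero]
    conv_lhs => rw [hMdecomp]
    rw [hDminv, Matrix.mul_diagonal, hX, zero_mul]
  have hMzero : ∀ i j : Fin n, ((i : ℕ) < (j : ℕ) ∨ (j : ℕ) + d < (i : ℕ)) → M i j = 0 :=
    fun i j h => h.elim (fun h' => hMlow i j (by rwa [Fin.lt_def])) (hMband i j)
  have hNzero : ∀ i j : Fin n, ((i : ℕ) < (j : ℕ) ∨ (j : ℕ) + d < (i : ℕ)) → N i j = 0 :=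
    fun i j h => h.elim (fun h' => hNlow i j (by rwa [Fin.lt_def])) (hNband i j)
  refine ⟨(M, N, Bh), ⟨hMzero, hMdiag, hNzero, hBhzero, ?_, ?_⟩, ?_⟩
  · rw [hBh, ← Matrix.mul_assoc, Matrix.nonsing_inv_mul _ hMunit, Matrix.one_mul]
  · rw [hN, ← Matrix.mul_assoc, Matrix.nonsing_inv_mul _ hMunit, Matrix.one_mul]
  · rintro ⟨M', N', B'⟩ ⟨h1, h2, h3, h4, h5, h6⟩
    have hM'low : ∀ i j : Fin n, i < j → M' i j = 0 := fun i j hij =>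
      h1 i j (Or.inl (by rwa [Fin.lt_def] at hij))
    have hM'unit : IsUnit M'.det := by
      rw [Stmt11Aux.det_unitLower M' hM'low h2]; exact isUnit_one
    have hB' : M' * B = B' := by
      rw [h5, ← Matrix.mul_assoc, Matrix.mul_nonsing_inv _ hM'unit, Matrix.one_mul]
    have hN' : M' * A = N' := by
      rw [h6, ← Matrix.mul_assoc, Matrix.mul_nonsing_inv _ hM'unit, Matrix.one_mul]
    have hech' : ∀ (i : Fin n) (c : Fin (d + n)), (c : ℕ) < (i : ℕ) → (M' * C) i c = 0 := by
      intro i c hclt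
      by_cases hcd : (c : ℕ) < d
      · rw [hcolB M' i c ⟨(c : ℕ), hcd⟩ rfl, hB']
        exact h4 i ⟨(c : ℕ), hcd⟩ hclt
      · have hcn : (c : ℕ) - d < n := by have := c.2; omega
        rw [hcolA M' i c ⟨(c : ℕ) - d, hcn⟩ (by simp; omega), hN']
        exact h3 i ⟨(c : ℕ) - d, hcn⟩ (Or.inr (by simp; omega))
    have hM'eq : M' = M := by
      rw [hM]
      exact Stmt11Aux.row_uniq C hminor M' hM'low h2 hech'
    have hN'eq : N' = N := by rw [← hN', hM'eq, hN]
    have hB'eq : B' = Bh := by rw [← hB', hM'eq, hBh]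
    rw [hM'eq, hN'eq, hB'eq]
end

section
/- Let M, N be the complex bidiagonal fraction matrices built from distinct |λ_k| < 1, with A = M⁻¹N and B = ρ_1 M⁻¹ e_1. Then (A,B) is controllable: the vectors B, AB, ..., A^{n−1}B span ℂⁿ. -/
open Matrix

private lemma sum_two_aux {n : ℕ} (j : Fin n) (v : Fin n → ℂ) (a : ℂ) (g : Fin n → ℂ) :
    (∑ i, v i * (if i = j then a else if (i : ℕ) = (j : ℕ) + 1 then g i else 0))
      = v j * a +
        (if h : (j : ℕ) + 1 < n then v ⟨(j : ℕ) + 1, h⟩ * g ⟨(j : ℕ) + 1, h⟩ else 0) := by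
  by_cases h : (j : ℕ) + 1 < n
  · rw [dif_pos h]
    set j' : Fin n := ⟨(j : ℕ) + 1, h⟩ with hj'
    have hne : j ≠ j' := by
      intro e
      have := congrArg Fin.val e
      simp [hj'] at this
    rw [Finset.sum_eq_add_of_mem j j' (Finset.mem_univ _) (Finset.mem_univ _) hne]
    · have h1 : (j' : ℕ) = (j : ℕ) + 1 := rfl
      simp [hne, Ne.symm hne, h1]
    · intro c _ hc
      have h1 : c ≠ j := hc.1
      have h2 : (c : ℕ) ≠ (j : ℕ) + 1 := by
        intro e
        exact hc.2 (Fin.ext e)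
      simp [h1, h2]
  · rw [dif_neg h]
    rw [Finset.sum_eq_single_of_mem j (Finset.mem_univ _)]
    · simp
    · intro c _ h1
      have h2 : (c : ℕ) ≠ (j : ℕ) + 1 := by
        intro e
        exact h (e ▸ c.isLt)
      simp [h1, h2]

/-- The single-input bidiagonal-fraction pair `(A, B) = (M⁻¹N, ρ_1 M⁻¹ e_1)` built from
distinct `|λ_k| < 1` is controllable: `B, AB, …, A^{n−1}B` span `ℂⁿ`. -/
theorem stmt17 {n : ℕ} (hn : 0 < n) (lam : Fin n → ℂ) (hlam : ∀ k, ‖lam k‖ < 1)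
    (hdistinct : Function.Injective lam)
    (ρ : Fin n → ℝ) (hρ : ∀ k, ρ k = Real.sqrt (1 - ‖lam k‖ ^ 2))
    (M N : Matrix (Fin n) (Fin n) ℂ)
    (hM : M = Matrix.of fun i j : Fin n =>
      if i = j then 1
      else if (i : ℕ) = (j : ℕ) + 1 then
        (starRingEnd ℂ) (lam j) * ((ρ i : ℂ) / (ρ j : ℂ))
      else 0)
    (hN : N = Matrix.of fun i j : Fin n =>
      if i = j then lam i
      else if (i : ℕ) = (j : ℕ) + 1 then ((ρ i : ℂ) / (ρ j : ℂ))
      else 0)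
    (B : Fin n → ℂ)
    (hB : B = (ρ ⟨0, hn⟩ : ℂ) • (M⁻¹).mulVec (Pi.single ⟨0, hn⟩ 1)) :
    Submodule.span ℂ
      (Set.range fun k : Fin n => ((M⁻¹ * N) ^ (k : ℕ)).mulVec B) = ⊤ := by
  set A : Matrix (Fin n) (Fin n) ℂ := M⁻¹ * N with hA
  set S : Submodule ℂ (Fin n → ℂ) :=
    Submodule.span ℂ (Set.range fun k : Fin n => (A ^ (k : ℕ)).mulVec B) with hSdef
  by_contra hS
  have hSlt : S < ⊤ := lt_top_iff_ne_top.mpr hS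
  -- basic positivity facts
  have hρpos : ∀ k, 0 < ρ k := by
    intro k
    rw [hρ k]
    apply Real.sqrt_pos.mpr
    nlinarith [norm_nonneg (lam k), hlam k]
  have hρC : ∀ k, (ρ k : ℂ) ≠ 0 := by
    intro k
    exact_mod_cast (hρpos k).ne'
  -- M is invertible
  have hMdet : M.det = 1 := by
    rw [Matrix.det_of_lowerTriangular M (by
      intro i j hij
      have hij' : i < j := hij
      rw [hM]
      simp only [Matrix.of_apply]
      rw [if_neg (by exact Fin.ne_of_lt hij'), if_neg (by omega)])]
    rw [hM]
    simp
  have hMunit : IsUnit M.det := by simp [hMdet]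
  -- generators are in S
  have hmem : ∀ k : ℕ, (hk : k < n) → (A ^ k).mulVec B ∈ S := by
    intro k hk
    exact Submodule.subset_span ⟨⟨k, hk⟩, rfl⟩
  -- the linear map C ↦ C *ᵥ B
  let φ : Matrix (Fin n) (Fin n) ℂ →ₗ[ℂ] (Fin n → ℂ) :=
    { toFun := fun C => C.mulVec B
      map_add' := fun C D => add_mulVec C D B
      map_smul' := fun a C => smul_mulVec a C B }
  -- Cayley–Hamilton : A^n *ᵥ B ∈ S
  have hAn : (A ^ n).mulVec B ∈ S := by
    have hdeg : A.charpoly.natDegree = n := by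
      rw [Matrix.charpoly_natDegree_eq_dim, Fintype.card_fin]
    have h0 : (Polynomial.aeval A) A.charpoly = 0 := Matrix.aeval_self_charpoly A
    rw [Polynomial.aeval_eq_sum_range, hdeg, Finset.sum_range_succ] at h0
    have hlead : A.charpoly.coeff n = 1 := by
      have hmon := A.charpoly_monic
      rw [Polynomial.Monic, Polynomial.leadingCoeff, hdeg] at hmon
      exact hmon
    rw [hlead, one_smul] at h0
    have hAeq : A ^ n = -∑ i ∈ Finset.range n, A.charpoly.coeff i • A ^ i :=
      eq_neg_of_add_eq_zero_right h0
    have hφ : (A ^ n).mulVec B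
        = -∑ i ∈ Finset.range n, A.charpoly.coeff i • (A ^ i).mulVec B := by
      show φ (A ^ n) = _
      rw [hAeq, map_neg, map_sum]
      congr 1
      refine Finset.sum_congr rfl fun i _ => ?_
      exact φ.map_smul _ _
    rw [hφ]
    refine Submodule.neg_mem _ (Submodule.sum_mem _ fun i hi => ?_)
    exact Submodule.smul_mem _ _ (hmem i (Finset.mem_range.mp hi))
  -- S is A-invariant
  have hinv : ∀ x ∈ S, A.mulVec x ∈ S := by
    intro x hx
    refine Submodule.span_induction (p := fun x _ => A.mulVec x ∈ S) ?_ ?_ ?_ ?_ hx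
    · rintro _ ⟨k, rfl⟩
      show A *ᵥ ((A ^ (k : ℕ)) *ᵥ B) ∈ S
      rw [Matrix.mulVec_mulVec, ← pow_succ']
      by_cases hk : (k : ℕ) + 1 < n
      · exact hmem _ hk
      · have : (k : ℕ) + 1 = n := by omega
        rw [this]
        exact hAn
    · simp
    · intro a b _ _ ha hb
      rw [mulVec_add]
      exact Submodule.add_mem _ ha hb
    · intro c a _ ha
      rw [mulVec_smul]
      exact Submodule.smul_mem _ _ ha
  -- a nonzero functional annihilating S, represented by a vector w₀
  obtain ⟨f, hf0, hfS⟩ := Submodule.exists_dual_map_eq_bot_of_lt_top hSlt inferInstance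
  set w₀ : Fin n → ℂ := fun j => f (Pi.single j 1) with hw₀def
  have hf_eq : ∀ x, f x = w₀ ⬝ᵥ x := by
    intro x
    rw [LinearMap.pi_apply_eq_sum_univ f x]
    have hsingle : ∀ i : Fin n, (fun j => if i = j then (1 : ℂ) else 0) = Pi.single i 1 := by
      intro i
      funext j
      simp [Pi.single_apply, eq_comm]
    simp only [hsingle]
    simp [dotProduct, hw₀def, mul_comm]
  have hw₀S : ∀ x ∈ S, w₀ ⬝ᵥ x = 0 := by
    intro x hx
    rw [← hf_eq]
    have : f x ∈ Submodule.map f S := ⟨x, hx, rfl⟩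
    rw [hfS] at this
    simpa using this
  have hw₀0 : w₀ ≠ 0 := by
    intro h
    apply hf0
    apply LinearMap.ext
    intro x
    rw [hf_eq x, h]
    simp
  -- the annihilator submodule W
  let W : Submodule ℂ (Fin n → ℂ) :=
    { carrier := {w | ∀ x ∈ S, w ⬝ᵥ x = 0}
      add_mem' := by
        intro a b ha hb x hx
        rw [add_dotProduct, ha x hx, hb x hx, add_zero]
      zero_mem' := by
        intro x hx
        rw [zero_dotProduct]
      smul_mem' := by
        intro c a ha x hx
        rw [smul_dotProduct, ha x hx, smul_zero] }
    -- W is invariant under Aᵀ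
  have hWinv : ∀ u ∈ W, (Aᵀ).mulVecLin u ∈ W := by
    intro u hu x hx
    rw [mulVecLin_apply, mulVec_transpose]
    rw [← dotProduct_mulVec]
    exact hu _ (hinv x hx)
  haveI : Nontrivial W := by
    refine ⟨⟨w₀, hw₀S⟩, 0, ?_⟩
    intro h
    exact hw₀0 (by simpa using congrArg Subtype.val h)
  -- eigenvector of the restriction
  let T : Module.End ℂ W := (Aᵀ).mulVecLin.restrict hWinv
  obtain ⟨μ, hμ⟩ := Module.End.exists_eigenvalue T
  obtain ⟨⟨w, hwW⟩, hwv⟩ := hμ.exists_hasEigenvector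
  have hw0 : w ≠ 0 := by
    intro h
    exact hwv.2 (Subtype.ext (by simp [h]))
  have heig : w ᵥ* A = μ • w := by
    have h1 := hwv.apply_eq_smul
    have h2 := congrArg Subtype.val h1
    simpa [T, LinearMap.restrict_apply, mulVecLin_apply, mulVec_transpose] using h2
  -- transfer through M : set v := w ᵥ* M⁻¹
  set v : Fin n → ℂ := w ᵥ* M⁻¹ with hvdef
  have hvM : v ᵥ* M = w := by
    rw [hvdef, vecMul_vecMul, Matrix.nonsing_inv_mul M hMunit, vecMul_one]
  have hvN : v ᵥ* N = μ • w := by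
    rw [hvdef, vecMul_vecMul, ← hA, heig]
  have hvne : v ≠ 0 := by
    intro h
    apply hw0
    rw [← hvM, h, zero_vecMul]
  -- B ∈ S and w ⬝ᵥ B = 0
  have hBS : B ∈ S := by
    have := hmem 0 hn
    simpa using this
  have hdotB : w ⬝ᵥ B = 0 := hwW B hBS
  have hv0 : v ⟨0, hn⟩ = 0 := by
    have hcalc : w ⬝ᵥ B = (ρ ⟨0, hn⟩ : ℂ) * v ⟨0, hn⟩ := by
      rw [hB, dotProduct_smul, smul_eq_mul, dotProduct_mulVec, ← hvdef, dotProduct_single,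
        mul_one]
    rw [hdotB] at hcalc
    exact (mul_eq_zero.mp hcalc.symm).resolve_left (hρC _)
  -- column formulas
  have colM : ∀ j : Fin n, (v ᵥ* M) j = v j +
      (if h : (j : ℕ) + 1 < n then
        v ⟨(j : ℕ) + 1, h⟩ * ((starRingEnd ℂ) (lam j) * ((ρ ⟨(j : ℕ) + 1, h⟩ : ℂ) / (ρ j : ℂ)))
      else 0) := by
    intro j
    have : (v ᵥ* M) j = ∑ i, v i * M i j := by simp [vecMul, dotProduct]
    rw [this, hM]
    simp only [Matrix.of_apply]
    rw [sum_two_aux j v 1 (fun i => (starRingEnd ℂ) (lam j) * ((ρ i : ℂ) / (ρ j : ℂ))), mul_one]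
  have colN : ∀ j : Fin n, (v ᵥ* N) j = v j * lam j +
      (if h : (j : ℕ) + 1 < n then
        v ⟨(j : ℕ) + 1, h⟩ * ((ρ ⟨(j : ℕ) + 1, h⟩ : ℂ) / (ρ j : ℂ))
      else 0) := by
    intro j
    have : (v ᵥ* N) j = ∑ i, v i * N i j := by simp [vecMul, dotProduct]
    rw [this, hN]
    simp only [Matrix.of_apply]
    have hfix : ∀ i : Fin n,
        (if i = j then lam i else if (i : ℕ) = (j : ℕ) + 1 then ((ρ i : ℂ) / (ρ j : ℂ)) else 0)
          = (if i = j then lam j else if (i : ℕ) = (j : ℕ) + 1 then ((ρ i : ℂ) / (ρ j : ℂ))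
            else 0) := by
      intro i
      by_cases hij : i = j <;> simp [hij]
    simp only [hfix]
    exact sum_two_aux j v (lam j) (fun i => (ρ i : ℂ) / (ρ j : ℂ))
  -- the basic column equation
  have hcol : ∀ j : Fin n, (v ᵥ* N) j = μ * (v ᵥ* M) j := by
    intro j
    rw [hvN, hvM]
    simp
  have key : ∀ (j : Fin n) (h : (j : ℕ) + 1 < n),
      v j * (lam j - μ) +
        v ⟨(j : ℕ) + 1, h⟩ * ((ρ ⟨(j : ℕ) + 1, h⟩ : ℂ) / (ρ j : ℂ)) *
          (1 - μ * (starRingEnd ℂ) (lam j)) = 0 := by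
    intro j h
    have e := hcol j
    rw [colM j, colN j, dif_pos h, dif_pos h] at e
    linear_combination e
  have keylast : ∀ (j : Fin n), ¬((j : ℕ) + 1 < n) → v j * (lam j - μ) = 0 := by
    intro j h
    have e := hcol j
    rw [colM j, colN j, dif_neg h, dif_neg h] at e
    linear_combination e
  -- μ is one of the lam's, hence ‖μ‖ < 1
  have hnorm : ‖μ‖ < 1 := by
    have hex : ∃ i, v i ≠ 0 := Function.ne_iff.mp hvne
    set s : Finset (Fin n) := Finset.univ.filter fun i => v i ≠ 0 with hs
    have hsne : s.Nonempty := by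
      obtain ⟨i, hi⟩ := hex
      exact ⟨i, by simp [hs, hi]⟩
    set m : Fin n := s.max' hsne with hm
    have hvm : v m ≠ 0 := by
      have := s.max'_mem hsne
      simp [hs] at this
      exact this
    have hmax : ∀ i, m < i → v i = 0 := by
      intro i hi
      by_contra hvi
      exact absurd (s.le_max' i (by simp [hs, hvi])) (not_le.mpr hi)
    have hμeq : lam m = μ := by
      have hzero : v m * (lam m - μ) = 0 := by
        by_cases h : (m : ℕ) + 1 < n
        · have hk := key m h
          have hz : v ⟨(m : ℕ) + 1, h⟩ = 0 := hmax _ (by simp [Fin.lt_def])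
          rw [hz] at hk
          simpa using hk
        · exact keylast m h
      exact sub_eq_zero.mp ((mul_eq_zero.mp hzero).resolve_left hvm)
    rw [← hμeq]
    exact hlam m
  have hc : ∀ j : Fin n, (1 : ℂ) - μ * (starRingEnd ℂ) (lam j) ≠ 0 := by
    intro j h
    have heq : μ * (starRingEnd ℂ) (lam j) = 1 := by
      have := sub_eq_zero.mp h
      exact this.symm
    have h1 : ‖μ * (starRingEnd ℂ) (lam j)‖ < 1 := by
      rw [norm_mul, RCLike.norm_conj]
      nlinarith [norm_nonneg μ, norm_nonneg (lam j), hlam j, hnorm]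
    rw [heq, norm_one] at h1
    exact lt_irrefl _ h1
  -- the recursion kills v
  have hzero : ∀ i : ℕ, (h : i < n) → v ⟨i, h⟩ = 0 := by
    intro i
    induction i with
    | zero => intro h; exact hv0
    | succ i ih =>
      intro h
      have hi : i < n := Nat.lt_of_succ_lt h
      have hkey := key ⟨i, hi⟩ (by simpa using h)
      rw [ih hi, zero_mul, zero_add] at hkey
      have h2 := (mul_eq_zero.mp hkey).resolve_right (hc _)
      have h3 := (mul_eq_zero.mp h2).resolve_right (div_ne_zero (hρC _) (hρC _))
      exact h3
  exact hvne (funext fun i => by simpa using hzero i i.isLt)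
end

section
/- For a single-input lower triangular input normal pair (d = 1), if (A,B) is controllable then the n×(n+1) matrix (B | A) has nonvanishing leading principal k×k minors for all k < n; hence every controllable single-input TIN pair admits the band fraction representation with bidiagonal M and N. -/
open Matrix

lemma sum_two' {ι : Type*} [DecidableEq ι] {M : Type*} [AddCommMonoid M] (f : ι → M)
    (a b : ι) (hab : a ≠ b) (h : ∀ c, c ≠ a → c ≠ b → f c = 0) [Fintype ι] :
    ∑ c, f c = f a + f b := by
  rw [← Finset.sum_pair hab]
  exact (Finset.sum_subset (Finset.subset_univ _) (fun x _ hx => by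
    simp only [Finset.mem_insert, Finset.mem_singleton, not_or] at hx
    exact h x hx.1 hx.2)).symm

lemma sum_extend' {M : Type*} [AddCommMonoid M] {n k : ℕ} (hk : k ≤ n) (f : Fin n → M)
    (hf : ∀ m : Fin n, k ≤ (m : ℕ) → f m = 0) :
    ∑ l : Fin k, f (Fin.castLE hk l) = ∑ m : Fin n, f m := by
  have : ∑ l : Fin k, f (Fin.castLE hk l) = ∑ m ∈ Finset.univ.map (Fin.castLEEmb hk), f m :=
    (Finset.sum_map Finset.univ (Fin.castLEEmb hk) f).symm
  rw [this]
  apply Finset.sum_subset (Finset.subset_univ _)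
  intro m _ hm
  apply hf
  by_contra h
  push_neg at h
  exact hm (Finset.mem_map.mpr ⟨⟨(m : ℕ), h⟩, Finset.mem_univ _, by
    simp [Fin.castLEEmb, Fin.castLE]⟩)

lemma sum_oneAdd' {M : Type*} [AddCommMonoid M] {n : ℕ} (f : Fin (1 + n) → M) :
    ∑ j : Fin (1 + n), f j = f ⟨0, by omega⟩ + ∑ l : Fin n, f ⟨(l : ℕ) + 1, by omega⟩ := by
  rw [← (finCongr (by omega : n + 1 = 1 + n)).sum_comp, Fin.sum_univ_succ]
  congr 1

/-- For a controllable single-input lower triangular input normal pair, the matrix `(B | A)`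
has nonvanishing leading principal minors of all orders `k < n`; hence the pair admits a
band fraction representation with bidiagonal `M` and `N`. -/
theorem stmt18 {n : ℕ} (A : Matrix (Fin n) (Fin n) ℂ) (B : Fin n → ℂ)
    (hLT : ∀ i j : Fin n, i < j → A i j = 0)
    (hIN : A * Aᴴ + Matrix.vecMulVec B (star B) = 1)
    (hctrb : Submodule.span ℂ
      (Set.range fun k : Fin n => (A ^ (k : ℕ)).mulVec B) = ⊤)
    (C : Matrix (Fin n) (Fin (1 + n)) ℂ)
    (hC : C = Matrix.of fun (i : Fin n) (j : Fin (1 + n)) =>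
      if h : (j : ℕ) < 1 then B i
      else A i ⟨(j : ℕ) - 1, by have := j.2; omega⟩) :
    (∀ k (hk : k < n),
      (C.submatrix (Fin.castLE hk.le) (Fin.castLE (by omega : k ≤ 1 + n))).det ≠ 0) ∧
    ∃ (M N : Matrix (Fin n) (Fin n) ℂ) (Bhat : Fin n → ℂ),
      (∀ i j : Fin n, ((i : ℕ) < (j : ℕ) ∨ (j : ℕ) + 1 < (i : ℕ)) → M i j = 0) ∧
      (∀ i : Fin n, M i i = 1) ∧
      (∀ i j : Fin n, ((i : ℕ) < (j : ℕ) ∨ (j : ℕ) + 1 < (i : ℕ)) → N i j = 0) ∧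
      (∀ j : Fin n, (j : ℕ) ≠ 0 → Bhat j = 0) ∧
      A = M⁻¹ * N ∧ B = (M⁻¹).mulVec Bhat := by
  classical
  -- entries of C
  have hCB : ∀ (i : Fin n) (j : Fin (1 + n)), (j : ℕ) = 0 → C i j = B i := by
    intro i j hj
    simp only [hC, Matrix.of_apply]
    rw [dif_pos (by omega)]
  have hCA : ∀ (i : Fin n) (j : Fin (1 + n)) (l : Fin n), (j : ℕ) = (l : ℕ) + 1 →
      C i j = A i l := by
    intro i j l hj
    simp only [hC, Matrix.of_apply]
    rw [dif_neg (by omega)]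
    congr 1
    exact Fin.ext (by simp [hj])
  have hsupp : ∀ (i : Fin n) (j : Fin (1 + n)), (i : ℕ) + 1 < (j : ℕ) → C i j = 0 := by
    intro i j hij
    simp only [hC, Matrix.of_apply]
    rw [dif_neg (by omega)]
    exact hLT i _ (by rw [Fin.lt_def]; simp; omega)
  -- orthonormal rows
  have hO : ∀ i i' : Fin n, (∑ j : Fin (1 + n), C i j * star (C i' j)) =
      if i = i' then 1 else 0 := by
    intro i i'
    have h1 := congrFun (congrFun hIN i) i'
    simp only [Matrix.add_apply, Matrix.mul_apply, Matrix.conjTranspose_apply,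
      Matrix.vecMulVec_apply, Matrix.one_apply, Pi.star_apply] at h1
    rw [sum_oneAdd' (fun j => C i j * star (C i' j))]
    rw [hCB i _ rfl, hCB i' _ rfl]
    rw [Finset.sum_congr rfl (fun l _ => by
      rw [hCA i _ l rfl, hCA i' _ l rfl])]
    rw [← h1]
    ring
  -- Part 1: nonvanishing leading minors
  have part1 : ∀ k (hk : k < n),
      (C.submatrix (Fin.castLE hk.le) (Fin.castLE (by omega : k ≤ 1 + n))).det ≠ 0 := by
    intro k
    induction k with
    | zero => intro hk; rw [Matrix.det_isEmpty]; exact one_ne_zero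
    | succ k IH =>
      intro hk hdet
      obtain ⟨v, hv0, hvS⟩ := Matrix.exists_vecMul_eq_zero_iff.mpr hdet
      set c : Fin n → ℂ := fun m => if h : (m : ℕ) < k + 1 then v ⟨(m : ℕ), h⟩ else 0 with hc
      set w : Fin (1 + n) → ℂ := fun j => ∑ m : Fin n, c m * C m j with hwdef
      have hcc : ∀ l : Fin (k + 1), c (Fin.castLE hk.le l) = v l := by
        intro l
        simp only [hc]
        rw [dif_pos (by simpa using l.2)]
        exact congrArg v (Fin.ext rfl)
      have hczero : ∀ m : Fin n, k + 1 ≤ (m : ℕ) → c m = 0 := by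
        intro m hm
        simp only [hc]
        rw [dif_neg (by omega)]
      have hw_sum : ∀ j : Fin (1 + n), w j
          = ∑ l : Fin (k + 1), v l * C (Fin.castLE hk.le l) j := by
        intro j
        show (∑ m : Fin n, c m * C m j) = _
        rw [← sum_extend' hk.le (fun m => c m * C m j)
          (fun m hm => by show c m * C m j = 0; rw [hczero m hm, zero_mul])]
        exact Finset.sum_congr rfl fun l _ => by rw [hcc]
      have hw_low : ∀ j : Fin (1 + n), (j : ℕ) < k + 1 → w j = 0 := by
        intro j hj
        rw [hw_sum]
        have h2 := congrFun hvS ⟨(j : ℕ), hj⟩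
        simp only [Matrix.vecMul, dotProduct, Matrix.submatrix_apply,
          Pi.zero_apply] at h2
        have h3 : Fin.castLE (by omega : k + 1 ≤ 1 + n) ⟨(j : ℕ), hj⟩ = j := Fin.ext rfl
        rw [h3] at h2
        exact h2
      set jk : Fin (1 + n) := ⟨k + 1, by omega⟩ with hjk
      set mk : Fin n := ⟨k, by omega⟩ with hmk
      have hw_single : ∀ m : Fin n, (m : ℕ) ≤ k → c m = w jk * star (C m jk) := by
        intro m hm
        have h1 : c m = ∑ j : Fin (1 + n), w j * star (C m j) := by
          have : ∀ j : Fin (1 + n), w j * star (C m j)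
              = ∑ i : Fin n, c i * (C i j * star (C m j)) := by
            intro j
            rw [hwdef, Finset.sum_mul]
            exact Finset.sum_congr rfl fun i _ => by ring
          rw [Finset.sum_congr rfl fun j _ => this j, Finset.sum_comm]
          rw [Finset.sum_congr rfl (fun i _ => by rw [← Finset.mul_sum, hO i m])]
          simp
        rw [h1]
        rw [Finset.sum_eq_single jk ?_ (fun h => absurd (Finset.mem_univ _) h)]
        intro j _ hj
        by_cases hjlt : (j : ℕ) < k + 1
        · rw [hw_low j hjlt, zero_mul]
        · have : (m : ℕ) + 1 < (j : ℕ) := by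
            have : (j : ℕ) ≠ k + 1 := fun h => hj (Fin.ext h)
            omega
          rw [hsupp m j this]
          simp
      have hclow : ∀ m : Fin n, (m : ℕ) < k → c m = 0 := by
        intro m hm
        rw [hw_single m hm.le]
        rw [hCA m jk ⟨k, by omega⟩ rfl, hLT m _ (by rw [Fin.lt_def]; exact hm)]
        simp
      have hcmk : c mk ≠ 0 := by
        intro h0
        apply hv0
        funext l
        rw [← hcc l]
        by_cases hl : (l : ℕ) < k
        · exact hclow _ (by simpa using hl)
        · have : Fin.castLE hk.le l = mk := Fin.ext (by have := l.2; simp [hmk]; omega)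
          rw [this, h0]
          rfl
      have hwjk : w jk ≠ 0 := by
        intro h0
        exact hcmk (by rw [hw_single mk le_rfl, h0, zero_mul])
      have hrow : ∀ j : Fin (1 + n), j ≠ jk → C mk j = 0 := by
        intro j hj
        by_cases hjlt : (j : ℕ) < k + 1
        · have hwj2 : w j = c mk * C mk j := by
            show (∑ m : Fin n, c m * C m j) = _
            rw [Finset.sum_eq_single mk ?_ (fun h => absurd (Finset.mem_univ _) h)]
            intro m _ hm
            by_cases h1 : (m : ℕ) < k
            · rw [hclow m h1, zero_mul]
            · by_cases h2 : (m : ℕ) < k + 1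
              · exact absurd (Fin.ext (by simp [hmk]; omega)) hm
              · rw [hczero m (by omega), zero_mul]
          have := hw_low j hjlt
          rw [hwj2] at this
          exact (mul_eq_zero.mp this).resolve_left hcmk
        · apply hsupp
          have : (j : ℕ) ≠ k + 1 := fun h => hj (Fin.ext h)
          simp [hmk]
          omega
      have hBmk : B mk = 0 := by
        rw [← hCB mk ⟨0, by omega⟩ rfl]
        exact hrow _ (fun h => by have := congrArg Fin.val h; simp [hjk] at this)
      have hAmk : ∀ l : Fin n, l ≠ mk → A mk l = 0 := by
        intro l hl
        rw [← hCA mk ⟨(l : ℕ) + 1, by omega⟩ l rfl]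
        refine hrow _ (fun h => hl ?_)
        have := congrArg Fin.val h
        simp [hjk] at this
        exact Fin.ext (by simpa using this)
      have hpow : ∀ p : ℕ, ((A ^ p) *ᵥ B) mk = 0 := by
        intro p
        induction p with
        | zero => simpa [Matrix.one_mulVec] using hBmk
        | succ p ih =>
          rw [pow_succ', ← Matrix.mulVec_mulVec]
          show (∑ l : Fin n, A mk l * ((A ^ p) *ᵥ B) l) = 0
          rw [Finset.sum_eq_single mk (fun l _ hl => by rw [hAmk l hl, zero_mul])
            (fun h => absurd (Finset.mem_univ _) h), ih, mul_zero]
      have hker : ∀ x ∈ Submodule.span ℂ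
          (Set.range fun p : Fin n => (A ^ (p : ℕ)).mulVec B), x mk = 0 := by
        intro x hx
        have hle : Submodule.span ℂ (Set.range fun p : Fin n => (A ^ (p : ℕ)).mulVec B)
            ≤ LinearMap.ker (LinearMap.proj (R := ℂ) (φ := fun _ : Fin n => ℂ) mk) := by
          rw [Submodule.span_le]
          rintro _ ⟨p, rfl⟩
          exact hpow (p : ℕ)
        exact hle hx
      have := hker (Pi.single mk 1) (by rw [hctrb]; trivial)
      simp at this
  refine ⟨part1, ?_⟩
  -- Part 2: existence of the bidiagonal fraction
  have key2 : ∀ i : Fin n, 0 < (i : ℕ) → ∃ m : ℂ, ∀ j : Fin (1 + n), (j : ℕ) < (i : ℕ) →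
      C i j + m * C ⟨(i : ℕ) - 1, by omega⟩ j = 0 := by
    intro i hi
    set iv : ℕ := (i : ℕ) with hiv
    have hivn : iv < n := i.2
    set S' : Matrix (Fin (iv + 1)) (Fin (iv + 1)) ℂ := Matrix.of fun l j =>
      if h : (j : ℕ) < iv then C ⟨(l : ℕ), by omega⟩ ⟨(j : ℕ), by omega⟩ else 0 with hS'
    have hdet0 : S'.det = 0 := by
      apply Matrix.det_eq_zero_of_column_eq_zero ⟨iv, by omega⟩
      intro l
      simp only [hS', Matrix.of_apply]
      rw [dif_neg (by simp)]
    obtain ⟨v, hv0, hvS⟩ := Matrix.exists_vecMul_eq_zero_iff.mpr hdet0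
    set c : Fin n → ℂ := fun m => if h : (m : ℕ) < iv + 1 then v ⟨(m : ℕ), h⟩ else 0 with hc
    set w : Fin (1 + n) → ℂ := fun j => ∑ m : Fin n, c m * C m j with hwdef
    have hcc : ∀ l : Fin (iv + 1), c (Fin.castLE (by omega) l) = v l := by
      intro l
      simp only [hc]
      rw [dif_pos (by simpa using l.2)]
      exact congrArg v (Fin.ext rfl)
    have hczero : ∀ m : Fin n, iv + 1 ≤ (m : ℕ) → c m = 0 := by
      intro m hm
      simp only [hc]
      rw [dif_neg (by omega)]
    have hw_sum : ∀ j : Fin (1 + n), w j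
        = ∑ l : Fin (iv + 1), v l * C (Fin.castLE (by omega) l) j := by
      intro j
      show (∑ m : Fin n, c m * C m j) = _
      rw [← sum_extend' (show iv + 1 ≤ n by omega) (fun m => c m * C m j)
        (fun m hm => by show c m * C m j = 0; rw [hczero m hm, zero_mul])]
      exact Finset.sum_congr rfl fun l _ => by rw [hcc]
    have hw_low : ∀ j : Fin (1 + n), (j : ℕ) < iv → w j = 0 := by
      intro j hj
      rw [hw_sum]
      have h2 := congrFun hvS ⟨(j : ℕ), by omega⟩
      simp only [Matrix.vecMul, dotProduct, Pi.zero_apply] at h2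
      rw [← h2]
      apply Finset.sum_congr rfl
      intro l _
      congr 1
      simp only [hS', Matrix.of_apply]
      rw [dif_pos (by simpa using hj)]
      congr 1 <;> exact Fin.ext rfl
    have hcsum : ∀ m : Fin n, c m = ∑ j : Fin (1 + n), w j * star (C m j) := by
      intro m
      have : ∀ j : Fin (1 + n), w j * star (C m j)
          = ∑ i' : Fin n, c i' * (C i' j * star (C m j)) := by
        intro j
        show (∑ i' : Fin n, c i' * C i' j) * star (C m j) = _
        rw [Finset.sum_mul]
        exact Finset.sum_congr rfl fun i' _ => by ring
      rw [Finset.sum_congr rfl fun j _ => this j, Finset.sum_comm]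
      rw [Finset.sum_congr rfl (fun i' _ => by rw [← Finset.mul_sum, hO i' m])]
      simp
    have hclow : ∀ m : Fin n, (m : ℕ) + 2 ≤ iv → c m = 0 := by
      intro m hm
      rw [hcsum m]
      apply Finset.sum_eq_zero
      intro j _
      by_cases hj : (j : ℕ) < iv
      · rw [hw_low j hj, zero_mul]
      · rw [hsupp m j (by omega)]
        simp
    have hcmk : c i ≠ 0 := by
      intro h0
      have hvzero : ∀ l : Fin (iv + 1), (l : ℕ) ≠ iv - 1 → v l = 0 := by
        intro l hl
        rw [← hcc l]
        by_cases h1 : (l : ℕ) = iv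
        · have : Fin.castLE (by omega : iv + 1 ≤ n) l = i := Fin.ext (by simpa using h1)
          rw [this, h0]
        · exact hclow _ (by simp; omega)
      -- build a null vector for the leading iv × iv minor
      apply part1 iv hivn
      rw [← Matrix.exists_vecMul_eq_zero_iff]
      refine ⟨fun l => v ⟨(l : ℕ), by omega⟩, ?_, ?_⟩
      · intro hu
        apply hv0
        funext l
        by_cases h1 : (l : ℕ) < iv
        · have h2 := congrFun hu ⟨(l : ℕ), h1⟩
          simp only [Pi.zero_apply] at h2
          exact (congrArg v (Fin.ext rfl)).trans h2
        · have h2 : (l : ℕ) = iv := by have := l.2; omega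
          rw [← hcc l]
          have h4 : Fin.castLE (by omega : iv + 1 ≤ n) l = i := Fin.ext (by simpa using h2)
          rw [h4, h0]
          rfl
      · funext j
        have h3 : v ⟨iv, by omega⟩ = 0 := by
          rw [← hcc ⟨iv, by omega⟩,
            show Fin.castLE (by omega : iv + 1 ≤ n) ⟨iv, by omega⟩ = i from Fin.ext rfl, h0]
        have h2 := congrFun hvS ⟨(j : ℕ), by omega⟩
        simp only [Matrix.vecMul, dotProduct, Pi.zero_apply] at h2
        simp only [Matrix.vecMul, dotProduct, Pi.zero_apply,
          Matrix.submatrix_apply]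
        refine Eq.trans ?_ h2
        rw [Fin.sum_univ_castSucc (f := fun l : Fin (iv + 1) =>
          v l * S' l ⟨(j : ℕ), by omega⟩)]
        rw [show v (Fin.last iv) = 0 from (congrArg v (Fin.ext rfl)).trans h3,
          zero_mul, add_zero]
        apply Finset.sum_congr rfl
        intro l _
        congr 1
        simp only [hS', Matrix.of_apply]
        rw [dif_pos (by simpa using j.2)]
        congr 1 <;> exact Fin.ext rfl
    -- now extract the two-term relation
    have hvi : v ⟨iv, by omega⟩ ≠ 0 := by
      intro h0
      apply hcmk
      rw [← hcc ⟨iv, by omega⟩] at h0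
      rw [show Fin.castLE (by omega : iv + 1 ≤ n) ⟨iv, by omega⟩ = i from Fin.ext rfl] at h0
      exact h0
    refine ⟨v ⟨iv - 1, by omega⟩ / v ⟨iv, by omega⟩, ?_⟩
    intro j hj
    have hw0 : w j = 0 := hw_low j hj
    have hw2 : w j = v ⟨iv - 1, by omega⟩
          * C (Fin.castLE (by omega : iv + 1 ≤ n) ⟨iv - 1, by omega⟩) j
        + v ⟨iv, by omega⟩ * C (Fin.castLE (by omega : iv + 1 ≤ n) ⟨iv, by omega⟩) j := by
      rw [hw_sum]
      refine sum_two' (fun l : Fin (iv + 1) =>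
          v l * C (Fin.castLE (by omega : iv + 1 ≤ n) l) j)
        ⟨iv - 1, by omega⟩ ⟨iv, by omega⟩
        (by intro h; have := congrArg Fin.val h; simp at this; omega) ?_
      intro l hl1 hl2
      have h1 : (l : ℕ) ≠ iv - 1 := fun h => hl1 (Fin.ext h)
      have h2 : (l : ℕ) ≠ iv := fun h => hl2 (Fin.ext h)
      show v l * C (Fin.castLE (by omega : iv + 1 ≤ n) l) j = 0
      rw [← hcc l, hclow _ (by simp only [Fin.coe_castLE]; have := l.2; omega), zero_mul]
    rw [show Fin.castLE (by omega : iv + 1 ≤ n) ⟨iv, by omega⟩ = i from Fin.ext rfl,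
      show Fin.castLE (by omega : iv + 1 ≤ n) ⟨iv - 1, by omega⟩
        = (⟨iv - 1, by omega⟩ : Fin n) from Fin.ext rfl, hw0] at hw2
    field_simp
    rw [mul_comm (v ⟨iv - 1, by omega⟩) (C ⟨iv - 1, by omega⟩ j)]
    linear_combination -hw2
  -- choose the subdiagonal multipliers
  let mf : Fin n → ℂ := fun i => if h : 0 < (i : ℕ) then (key2 i h).choose else 0
  have hmf : ∀ (i : Fin n) (h : 0 < (i : ℕ)) (j : Fin (1 + n)), (j : ℕ) < (i : ℕ) →
      C i j + mf i * C ⟨(i : ℕ) - 1, by omega⟩ j = 0 := by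
    intro i h j hj
    have : mf i = (key2 i h).choose := dif_pos h
    rw [this]
    exact (key2 i h).choose_spec j hj
  set M : Matrix (Fin n) (Fin n) ℂ := Matrix.of fun i j =>
    if (i : ℕ) = (j : ℕ) then 1 else if (j : ℕ) + 1 = (i : ℕ) then mf i else 0 with hM
  have hMband : ∀ i j : Fin n, ((i : ℕ) < (j : ℕ) ∨ (j : ℕ) + 1 < (i : ℕ)) → M i j = 0 := by
    intro i j hij
    simp only [hM, Matrix.of_apply]
    rw [if_neg (by omega), if_neg (by omega)]
  have hMdiag : ∀ i : Fin n, M i i = 1 := by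
    intro i
    simp [hM]
  have hMsub : ∀ i j : Fin n, (j : ℕ) + 1 = (i : ℕ) → M i j = mf i := by
    intro i j hij
    simp only [hM, Matrix.of_apply]
    rw [if_neg (by omega), if_pos hij]
  have hdetM : M.det = 1 := by
    rw [Matrix.det_of_lowerTriangular M (fun i j h => hMband i j (Or.inl h))]
    simp [hMdiag]
  have hMunit : IsUnit M.det := by rw [hdetM]; exact isUnit_one
  have hMinv : M⁻¹ * M = 1 := Matrix.nonsing_inv_mul M hMunit
  -- two-term expansion of rows of M
  have hMrow : ∀ (i : Fin n) (f : Fin n → ℂ), 0 < (i : ℕ) →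
      (∑ l : Fin n, M i l * f l) = f i + mf i * f ⟨(i : ℕ) - 1, by omega⟩ := by
    intro i f hi
    rw [sum_two' (fun l => M i l * f l) i ⟨(i : ℕ) - 1, by omega⟩
      (by intro h; have := congrArg Fin.val h; simp at this; omega)
      (fun l hl1 hl2 => by
        show M i l * f l = 0
        rw [hMband i l ?_, zero_mul]
        have h1 : (l : ℕ) ≠ (i : ℕ) := fun h => hl1 (Fin.ext h)
        have h2 : (l : ℕ) ≠ (i : ℕ) - 1 := fun h => hl2 (Fin.ext h)
        omega)]
    rw [hMdiag, one_mul, hMsub i ⟨(i : ℕ) - 1, by omega⟩ (by simp; omega)]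
  have hMrow0 : ∀ (i : Fin n) (f : Fin n → ℂ), (i : ℕ) = 0 →
      (∑ l : Fin n, M i l * f l) = f i := by
    intro i f hi
    rw [Finset.sum_eq_single i (fun l _ hl => by
        rw [hMband i l (by have : (l : ℕ) ≠ (i : ℕ) := fun h => hl (Fin.ext h); omega),
          zero_mul])
      (fun h => absurd (Finset.mem_univ _) h), hMdiag, one_mul]
  refine ⟨M, M * A, M *ᵥ B, hMband, hMdiag, ?_, ?_, ?_, ?_⟩
  · -- N = M * A is bidiagonal
    intro i j hij
    rw [Matrix.mul_apply]
    by_cases hi : 0 < (i : ℕ)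
    · rw [hMrow i (fun l => A l j) hi]
      rcases hij with hij | hij
      · rw [hLT i j (by rwa [Fin.lt_def]),
          hLT ⟨(i : ℕ) - 1, by omega⟩ j (by rw [Fin.lt_def]; simp; omega)]
        simp
      · have := hmf i hi ⟨(j : ℕ) + 1, by omega⟩ (by simpa using (by omega : (j : ℕ) + 1 < (i : ℕ)))
        rw [hCA i ⟨(j : ℕ) + 1, by omega⟩ j rfl, hCA _ ⟨(j : ℕ) + 1, by omega⟩ j rfl] at this
        exact this
    · rw [hMrow0 i (fun l => A l j) (by omega)]
      exact hLT i j (by rw [Fin.lt_def]; omega)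
  · -- Bhat is supported at 0
    intro j hj
    show (∑ l : Fin n, M j l * B l) = 0
    rw [hMrow j B (by omega)]
    have := hmf j (by omega) ⟨0, by omega⟩ (by simpa using (by omega : 0 < (j : ℕ)))
    rw [hCB j ⟨0, by omega⟩ rfl, hCB _ ⟨0, by omega⟩ rfl] at this
    exact this
  · rw [← Matrix.mul_assoc, hMinv, Matrix.one_mul]
  · rw [Matrix.mulVec_mulVec, hMinv, Matrix.one_mulVec]
end
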